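/- arXiv:1003.4358 — 4 statements merged into one kernel-verified Lean document; each statement's English description precedes it below -/
import Mathlib

section
/- Let k be an algebraically closed field of characteristic p > 0 and g a finite-dimensional restricted Lie algebra over k with a torus t of maximal dimension μ(g). If n is a nilpotent restricted subalgebra of g of dimension rk(g) containing t as its (unique) maximal torus, then for ℓ = rk(g) − μ(g), the map x ↦ x^{[p]^ℓ} sends n onto t; in particular every element x of n satisfies x^{[p]^ℓ} ∈ t. -/
open Module

/-- Iterated bracket words in two elements `x`, `y` of a Lie ring. -/
inductive IsBracketWord {L : Type*} [LieRing L] (x y : L) : L → Prop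
  | base_left : IsBracketWord x y x
  | base_right : IsBracketWord x y y
  | bracket {u v : L} : IsBracketWord x y u → IsBracketWord x y v →
      IsBracketWord x y ⁅u, v⁆

/-- A `p`-mapping on a Lie algebra `L` over `k`: `ad (x^{[p]}) = (ad x)^p`,
`(c • x)^{[p]} = c^p • x^{[p]}`, and Jacobson's formula (abstracted: the defect of
additivity lies in the span of iterated bracket words of length at least two). -/
structure PMapStruct (k : Type*) (L : Type*) [Field k] [LieRing L] [LieAlgebra k L]
    (p : ℕ) where
  toFun : L → L
  smul_pow : ∀ (c : k) (x : L), toFun (c • x) = c ^ p • toFun x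
  ad_pow : ∀ x y : L, ⁅toFun x, y⁆ = (fun z => ⁅x, z⁆)^[p] y
  jacobson : ∀ x y : L, toFun (x + y) - toFun x - toFun y ∈
    Submodule.span k {z | ∃ u v, IsBracketWord x y u ∧ IsBracketWord x y v ∧ z = ⁅u, v⁆}

/-- A torus: a restricted subalgebra all of whose elements are `p`-semisimple. -/
def IsTorus {k L : Type*} [Field k] [LieRing L] [LieAlgebra k L] {p : ℕ}
    (P : PMapStruct k L p) (t : LieSubalgebra k L) : Prop :=
  (∀ x ∈ t, P.toFun x ∈ t) ∧
    ∀ x ∈ t, x ∈ Submodule.span k (Set.range fun i : ℕ => P.toFun^[i + 1] x)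

section Aux
set_option linter.unusedSectionVars false

variable {k L : Type*} [Field k] [IsAlgClosed k] [LieRing L] [LieAlgebra k L]
  {p : ℕ} [Fact p.Prime] [CharP k p] (P : PMapStruct k L p)

lemma word_eq {x y w : L} (hxy : ⁅x, y⁆ = 0) (hw : IsBracketWord x y w) :
    w = x ∨ w = y ∨ w = 0 := by
  induction hw with
  | base_left => exact Or.inl rfl
  | base_right => exact Or.inr (Or.inl rfl)
  | @bracket u v hu hv ihu ihv =>
    refine Or.inr (Or.inr ?_)
    have hyx : ⁅y, x⁆ = 0 := by rw [← lie_skew, hxy, neg_zero]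
    rcases ihu with h | h | h <;> rcases ihv with h' | h' | h' <;> subst h h' <;>
      simp [hxy, hyx]

lemma pzero : P.toFun 0 = 0 := by
  have h := P.smul_pow 0 0
  simpa [zero_pow (Fact.out : p.Prime).ne_zero] using h

lemma padd {u v : L} (h : ⁅u, v⁆ = 0) : P.toFun (u + v) = P.toFun u + P.toFun v := by
  have hj := P.jacobson u v
  have hsub : {z : L | ∃ a b, IsBracketWord u v a ∧ IsBracketWord u v b ∧ z = ⁅a, b⁆}
      ⊆ {0} := by
    rintro z ⟨a, b, ha, hb, rfl⟩
    have hvu : ⁅v, u⁆ = 0 := by rw [← lie_skew, h, neg_zero]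
    rcases word_eq h ha with h1 | h1 | h1 <;> rcases word_eq h hb with h2 | h2 | h2 <;>
      subst h1 h2 <;> simp [h, hvu]
  have hle : Submodule.span k
      {z : L | ∃ a b, IsBracketWord u v a ∧ IsBracketWord u v b ∧ z = ⁅a, b⁆}
      ≤ (⊥ : Submodule k L) := by
    rw [← Submodule.span_zero_singleton k]
    exact Submodule.span_mono hsub
  have h0 : P.toFun (u + v) - P.toFun u - P.toFun v = 0 := by
    simpa using hle hj
  exact sub_eq_zero.mp (by rw [sub_sub] at h0; exact h0)

lemma aditer (m : ℕ) (x : L) : ∀ y : L, ⁅P.toFun^[m] x, y⁆ = (fun z => ⁅x, z⁆)^[p ^ m] y := by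
  induction m with
  | zero => intro y; simp
  | succ m ih =>
    intro y
    have hfun : (fun z => ⁅P.toFun^[m] x, z⁆) = (fun z => ⁅x, z⁆)^[p ^ m] :=
      funext fun z => ih z
    calc ⁅P.toFun^[m + 1] x, y⁆ = ⁅P.toFun (P.toFun^[m] x), y⁆ := by
          rw [Function.iterate_succ_apply']
      _ = (fun z => ⁅P.toFun^[m] x, z⁆)^[p] y := P.ad_pow _ y
      _ = ((fun z => ⁅x, z⁆)^[p ^ m])^[p] y := by rw [hfun]
      _ = (fun z => ⁅x, z⁆)^[p ^ m * p] y := by rw [← Function.iterate_mul]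
      _ = (fun z => ⁅x, z⁆)^[p ^ (m + 1)] y := by rw [← pow_succ]

lemma ad_iter_zero (x : L) (j : ℕ) : ⁅x, P.toFun^[j] x⁆ = 0 := by
  cases j with
  | zero => simp
  | succ m =>
    have h1 : ⁅P.toFun^[m + 1] x, x⁆ = 0 := by
      rw [aditer]
      obtain ⟨q, hq⟩ : ∃ q, p ^ (m + 1) = q + 1 := by
        have hp : 0 < p ^ (m + 1) := pow_pos (Fact.out : p.Prime).pos _
        exact ⟨p ^ (m + 1) - 1, by omega⟩
      rw [hq, Function.iterate_succ_apply]
      rw [lie_self]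
      exact Function.iterate_fixed (lie_zero x) q
    rw [← lie_skew, h1, neg_zero]

lemma iter_comm (x : L) (i j : ℕ) : ⁅P.toFun^[i] x, P.toFun^[j] x⁆ = 0 := by
  rw [aditer]
  obtain ⟨q, hq⟩ : ∃ q, p ^ i = q + 1 := by
    have hp : 0 < p ^ i := pow_pos (Fact.out : p.Prime).pos _
    exact ⟨p ^ i - 1, by omega⟩
  rw [hq, Function.iterate_succ_apply]
  rw [ad_iter_zero P x j]
  exact Function.iterate_fixed (lie_zero x) q

lemma proot (c : k) : ∃ r : k, r ^ p = c := by
  obtain ⟨r, hr⟩ := surjective_frobenius k p c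
  exact ⟨r, by simpa [frobenius_def] using hr⟩

section Semi

variable [Module.Finite k L] (W : Submodule k L)
  (hab : ∀ u ∈ W, ∀ v ∈ W, ⁅u, v⁆ = (0 : L))
  (hst : ∀ v ∈ W, P.toFun v ∈ W)

include hab hst

omit hst in
lemma gsum {ι : Type*} (s : Finset ι) (f : ι → L) (hf : ∀ i ∈ s, f i ∈ W) :
    P.toFun (∑ i ∈ s, f i) = ∑ i ∈ s, P.toFun (f i) := by
  classical
  induction s using Finset.cons_induction with
  | empty => simpa using pzero P
  | cons a s ha ih =>
    rw [Finset.sum_cons, Finset.sum_cons]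
    have h1 : f a ∈ W := hf a (Finset.mem_cons_self a s)
    have h2 : (∑ i ∈ s, f i) ∈ W := Submodule.sum_mem W fun i hi => hf i (Finset.mem_cons_of_mem hi)
    rw [padd P (hab _ h1 _ h2), ih fun i hi => hf i (Finset.mem_cons_of_mem hi)]

omit hst in
lemma gspan {S : Set L} (hS : S ⊆ W) {v : L} (hv : v ∈ Submodule.span k S) :
    P.toFun v ∈ Submodule.span k (P.toFun '' S) := by
  have key : v ∈ W ∧ P.toFun v ∈ Submodule.span k (P.toFun '' S) := by
    induction hv using Submodule.span_induction with
    | mem z hz => exact ⟨hS hz, Submodule.subset_span ⟨z, hz, rfl⟩⟩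
    | zero => exact ⟨W.zero_mem, by rw [pzero P]; exact Submodule.zero_mem _⟩
    | add u v _ _ ihu ihv =>
      exact ⟨W.add_mem ihu.1 ihv.1, by
        rw [padd P (hab _ ihu.1 _ ihv.1)]; exact Submodule.add_mem _ ihu.2 ihv.2⟩
    | smul c v _ ihv =>
      exact ⟨W.smul_mem c ihv.1, by
        rw [P.smul_pow]; exact Submodule.smul_mem _ _ ihv.2⟩
  exact key.2

omit hst in
lemma exists_preimage (hsur : W ≤ Submodule.span k (P.toFun '' W)) :
    ∀ y ∈ W, ∃ v ∈ W, P.toFun v = y := by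
  intro y hy
  have hy' : y ∈ Submodule.span k (P.toFun '' (W : Set L)) := hsur hy
  clear hy
  induction hy' using Submodule.span_induction with
  | mem z hz => obtain ⟨v, hv, rfl⟩ := hz; exact ⟨v, hv, rfl⟩
  | zero => exact ⟨0, W.zero_mem, pzero P⟩
  | add u v hu hv ihu ihv =>
    obtain ⟨a, ha, rfl⟩ := ihu
    obtain ⟨b, hb, rfl⟩ := ihv
    exact ⟨a + b, W.add_mem ha hb, padd P (hab _ ha _ hb)⟩
  | smul c v hv ihv =>
    obtain ⟨a, ha, rfl⟩ := ihv
    obtain ⟨r, rfl⟩ := proot (p := p) c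
    exact ⟨r • a, W.smul_mem r ha, P.smul_pow r a⟩

omit hab in
lemma iter_mem (m : ℕ) : ∀ v ∈ W, P.toFun^[m] v ∈ W := by
  induction m with
  | zero => intro v hv; simpa using hv
  | succ m ih =>
    intro v hv
    rw [Function.iterate_succ_apply']
    exact hst _ (ih v hv)

lemma iter_add (m : ℕ) : ∀ u ∈ W, ∀ v ∈ W,
    P.toFun^[m] (u + v) = P.toFun^[m] u + P.toFun^[m] v := by
  induction m with
  | zero => intros; simp
  | succ m ih =>
    intro u hu v hv
    rw [Function.iterate_succ_apply', Function.iterate_succ_apply',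
      Function.iterate_succ_apply', ih u hu v hv,
      padd P (hab _ (iter_mem P W hst m u hu) _ (iter_mem P W hst m v hv))]

omit hab hst in
lemma iter_smul (m : ℕ) (c : k) (v : L) :
    P.toFun^[m] (c • v) = c ^ (p ^ m) • P.toFun^[m] v := by
  induction m generalizing c v with
  | zero => simp
  | succ m ih =>
    rw [Function.iterate_succ_apply, Function.iterate_succ_apply, P.smul_pow,
      ih (c ^ p) (P.toFun v), ← pow_mul, ← pow_succ']

omit hst in
lemma finrank_span_image (V : Submodule k L) (hVW : V ≤ W)
    (hinj : ∀ v ∈ V, P.toFun v = 0 → v = 0) :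
    finrank k (Submodule.span k (P.toFun '' (V : Set L))) = finrank k V := by
  classical
  have : FiniteDimensional k V := FiniteDimensional.finiteDimensional_submodule V
  let b := Module.finBasis k V
  set d := finrank k V with hd
  set w : Fin d → L := fun i => P.toFun ((b i : L)) with hw
  have hspan : Submodule.span k (Set.range w) = Submodule.span k (P.toFun '' (V : Set L)) := by
    apply le_antisymm
    · refine Submodule.span_mono ?_
      rintro _ ⟨i, rfl⟩
      exact ⟨(b i : L), (b i).2, rfl⟩
    · rw [Submodule.span_le]
      rintro _ ⟨v, hv, rfl⟩
      have hrep : (⟨v, hv⟩ : V) = ∑ i, b.repr ⟨v, hv⟩ i • b i := (b.sum_repr _).symm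
      have hv' : v = ∑ i, b.repr ⟨v, hv⟩ i • (b i : L) := by
        have := congrArg (Submodule.subtype V) hrep
        simp only [map_sum, map_smul, Submodule.subtype_apply] at this
        exact this
      rw [hv', gsum P W hab _ _ (fun i _ => W.smul_mem _ (hVW (b i).2))]
      refine Submodule.sum_mem _ fun i _ => ?_
      rw [P.smul_pow]
      exact Submodule.smul_mem _ _ (Submodule.subset_span ⟨i, rfl⟩)
  have hli : LinearIndependent k w := by
    rw [Fintype.linearIndependent_iff]
    intro a ha
    choose r hr using fun i => proot (p := p) (a i)
    have hsum : P.toFun (∑ i, r i • (b i : L)) = 0 := by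
      rw [gsum P W hab _ _ (fun i _ => W.smul_mem _ (hVW (b i).2))]
      calc (∑ i, P.toFun (r i • (b i : L))) = ∑ i, a i • w i := by
            refine Finset.sum_congr rfl fun i _ => ?_
            rw [P.smul_pow, hr i]
        _ = 0 := ha
    have hmem : (∑ i, r i • (b i : L)) ∈ V :=
      Submodule.sum_mem _ fun i _ => V.smul_mem _ (b i).2
    have h0 : (∑ i, r i • (b i : L)) = 0 := hinj _ hmem hsum
    have h0' : (∑ i, r i • b i : V) = 0 := by
      apply Subtype.ext
      simpa using h0
    have hr0 : ∀ i, r i = 0 := Fintype.linearIndependent_iff.mp b.linearIndependent r h0'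
    intro i
    rw [← hr i, hr0 i, zero_pow (Fact.out : p.Prime).ne_zero]
  rw [← hspan, finrank_span_eq_card hli, Fintype.card_fin]

omit hst in
lemma inj_of_sur (hsur : W ≤ Submodule.span k (P.toFun '' (W : Set L)))
    (hstW : ∀ v ∈ W, P.toFun v ∈ W) :
    ∀ v ∈ W, P.toFun v = 0 → v = 0 := by
  classical
  let K : Submodule k L :=
    { carrier := {v | v ∈ W ∧ P.toFun v = 0}
      add_mem' := fun {a b} ha hb => ⟨W.add_mem ha.1 hb.1, by
        rw [padd P (hab _ ha.1 _ hb.1), ha.2, hb.2, add_zero]⟩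
      zero_mem' := ⟨W.zero_mem, pzero P⟩
      smul_mem' := fun c a ha => ⟨W.smul_mem c ha.1, by
        rw [P.smul_pow, ha.2, smul_zero]⟩ }
  have hKW : K ≤ W := fun v hv => hv.1
  let K' : Submodule k W := K.comap W.subtype
  obtain ⟨C', hC'⟩ := Submodule.exists_isCompl K'
  let C : Submodule k L := C'.map W.subtype
  have hCW : C ≤ W := by
    rintro _ ⟨v', _, rfl⟩
    exact v'.2
  have hinjC : ∀ v ∈ C, P.toFun v = 0 → v = 0 := by
    rintro _ ⟨v', hv', rfl⟩ h0
    have hvK : (v' : L) ∈ K := ⟨v'.2, h0⟩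
    have : v' ∈ K' ⊓ C' := ⟨hvK, hv'⟩
    rw [hC'.inf_eq_bot] at this
    rw [this]
    rfl
  have himg : Submodule.span k (P.toFun '' (C : Set L))
      = Submodule.span k (P.toFun '' (W : Set L)) := by
    apply le_antisymm
    · exact Submodule.span_mono (Set.image_mono hCW)
    · rw [Submodule.span_le]
      rintro _ ⟨v, hv, rfl⟩
      have hmem : (⟨v, hv⟩ : W) ∈ K' ⊔ C' := by rw [hC'.sup_eq_top]; trivial
      obtain ⟨a, ha, b, hb, hab'⟩ := Submodule.mem_sup.mp hmem
      have hv' : v = (a : L) + (b : L) := by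
        have := congrArg (Submodule.subtype W) hab'
        simpa using this.symm
      rw [hv', padd P (hab _ a.2 _ b.2)]
      have haK : P.toFun (a : L) = 0 := ha.2
      rw [haK, zero_add]
      exact Submodule.subset_span ⟨(b : L), ⟨b, hb, rfl⟩, rfl⟩
  have h1 : finrank k W ≤ finrank k C := by
    calc finrank k W ≤ finrank k (Submodule.span k (P.toFun '' (W : Set L))) :=
          Submodule.finrank_mono hsur
      _ = finrank k (Submodule.span k (P.toFun '' (C : Set L))) := by rw [himg]
      _ = finrank k C := finrank_span_image P W hab C hCW hinjC
  have h2 : finrank k C = finrank k C' := Submodule.finrank_map_subtype_eq W C'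
  have h3 : finrank k K' + finrank k C' = finrank k W :=
    Submodule.finrank_add_eq_of_isCompl hC'
  have hK'bot : K' = ⊥ := by
    have h4 : finrank k K' = 0 := by omega
    exact Submodule.finrank_eq_zero.mp h4
  intro v hv h0
  have : (⟨v, hv⟩ : W) ∈ K' := ⟨hv, h0⟩
  rw [hK'bot] at this
  simpa using congrArg (Submodule.subtype W) this

lemma semi_main (hsur : W ≤ Submodule.span k (P.toFun '' (W : Set L))) :
    ∀ w ∈ W, w ∈ Submodule.span k (Set.range fun i : ℕ => P.toFun^[i + 1] w) := by
  intro w hw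
  have hinj := inj_of_sur P W hab hsur hst
  set U₀ : Submodule k L := Submodule.span k (Set.range fun i : ℕ => P.toFun^[i] w) with hU₀
  set U₁ : Submodule k L := Submodule.span k (Set.range fun i : ℕ => P.toFun^[i + 1] w) with hU₁
  have hU₀W : U₀ ≤ W := by
    rw [hU₀, Submodule.span_le]
    rintro _ ⟨i, rfl⟩
    exact iter_mem P W hst i w hw
  have h10 : U₁ ≤ U₀ := by
    rw [hU₁, Submodule.span_le]
    rintro _ ⟨i, rfl⟩
    exact Submodule.subset_span ⟨i + 1, rfl⟩
  have himg : U₁ = Submodule.span k (P.toFun '' (U₀ : Set L)) := by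
    apply le_antisymm
    · rw [hU₁, Submodule.span_le]
      rintro _ ⟨i, rfl⟩
      refine Submodule.subset_span ⟨P.toFun^[i] w, Submodule.subset_span ⟨i, rfl⟩, ?_⟩
      rw [← Function.iterate_succ_apply' P.toFun i w]
    · rw [Submodule.span_le]
      rintro _ ⟨v, hv, rfl⟩
      have := gspan P W hab (S := Set.range fun i : ℕ => P.toFun^[i] w)
        (by rintro _ ⟨i, rfl⟩; exact iter_mem P W hst i w hw) hv
      refine Submodule.span_le.mpr ?_ this
      rintro _ ⟨_, ⟨i, rfl⟩, rfl⟩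
      exact Submodule.subset_span ⟨i, Function.iterate_succ_apply' P.toFun i w⟩
  have hfr : finrank k U₁ = finrank k U₀ := by
    rw [himg]
    exact finrank_span_image P W hab U₀ hU₀W fun v hv h0 => hinj v (hU₀W hv) h0
  have : U₁ = U₀ := Submodule.eq_of_le_of_finrank_le h10 hfr.ge
  have hw0 : w ∈ U₀ := Submodule.subset_span ⟨0, rfl⟩
  rw [← this] at hw0
  exact hw0

end Semi

lemma central {t n : LieSubalgebra k L} (htn : t ≤ n) (hnnil : LieRing.IsNilpotent n)
    (ht2 : ∀ x ∈ t, x ∈ Submodule.span k (Set.range fun i : ℕ => P.toFun^[i + 1] x)) :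
    ∀ x ∈ t, ∀ y ∈ n, ⁅x, y⁆ = 0 := by
  intro x hxt
  haveI := hnnil
  set X : n := ⟨x, htn hxt⟩ with hX
  set D : Module.End k n := LieAlgebra.ad k n X with hD
  have hDnil : IsNilpotent D := LieModule.isNilpotent_toEnd_of_isNilpotent k n n X
  -- the linear map z ↦ (y ↦ ⁅z, ↑y⁆)
  let Ψ : L →ₗ[k] (n →ₗ[k] L) :=
    { toFun := fun z =>
        { toFun := fun y => ⁅z, (y : L)⁆
          map_add' := fun a b => by simp
          map_smul' := fun c a => by
            show ⁅z, ((c • a : n) : L)⁆ = c • ⁅z, (a : L)⁆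
            have h : ((c • a : n) : L) = c • (a : L) := rfl
            rw [h, lie_smul] }
      map_add' := fun a b => by
        ext y
        show ⁅a + b, (y : L)⁆ = ⁅a, (y : L)⁆ + ⁅b, (y : L)⁆
        rw [add_lie]
      map_smul' := fun c a => by
        ext y
        show ⁅c • a, (y : L)⁆ = c • ⁅a, (y : L)⁆
        rw [smul_lie] }
  let Θ : (n →ₗ[k] n) →ₗ[k] (n →ₗ[k] L) := LinearMap.llcomp k n n L n.toSubmodule.subtype
  have hΘinj : Function.Injective Θ := by
    intro E E' hEE
    ext y
    have h := congrArg (fun F => F y) hEE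
    have h' : ((E y : n) : L) = ((E' y : n) : L) := h
    exact h'
  have hcoe : ∀ (m : ℕ) (y : n), ((D ^ m) y : L) = (fun z => ⁅x, z⁆)^[m] (y : L) := by
    intro m
    induction m with
    | zero => intro y; simp
    | succ m ih =>
      intro y
      rw [pow_succ, Function.iterate_succ_apply]
      have : (D ^ m * D) y = (D ^ m) (D y) := rfl
      rw [this, ih (D y)]
      have hDy : ((D y : L)) = ⁅x, (y : L)⁆ := rfl
      rw [hDy]
  have key1 : Ψ x = Θ D := by
    ext y
    rfl
  have key2 : ∀ i : ℕ, Ψ (P.toFun^[i + 1] x) = Θ (D ^ (p ^ (i + 1))) := by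
    intro i
    ext y
    have h1 : ⁅P.toFun^[i + 1] x, (y : L)⁆ = (fun z => ⁅x, z⁆)^[p ^ (i + 1)] (y : L) :=
      aditer P (i + 1) x y
    simp only [Ψ, Θ, LinearMap.coe_mk, AddHom.coe_mk, LinearMap.llcomp_apply,
      LinearMap.coe_comp, Function.comp_apply, Submodule.coe_subtype]
    rw [h1, ← hcoe]
    rfl
  have hmem : Θ D ∈ Submodule.span k (Set.range fun i : ℕ => Θ (D ^ (p ^ (i + 1)))) := by
    have h0 := ht2 x hxt
    have h1 : Ψ x ∈ Submodule.map Ψ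
        (Submodule.span k (Set.range fun i : ℕ => P.toFun^[i + 1] x)) :=
      Submodule.mem_map_of_mem h0
    rw [Submodule.map_span, ← Set.range_comp] at h1
    have h2 : (Ψ ∘ fun i : ℕ => P.toFun^[i + 1] x) = fun i : ℕ => Θ (D ^ (p ^ (i + 1))) :=
      funext fun i => key2 i
    rw [h2] at h1
    rw [← key1]
    exact h1
  have hDmem : D ∈ Submodule.span k (Set.range fun i : ℕ => D ^ (p ^ (i + 1))) := by
    have : Submodule.span k (Set.range fun i : ℕ => Θ (D ^ (p ^ (i + 1))))
        = Submodule.map Θ (Submodule.span k (Set.range fun i : ℕ => D ^ (p ^ (i + 1)))) := by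
      rw [Submodule.map_span, ← Set.range_comp]
      rfl
    rw [this] at hmem
    obtain ⟨E, hE, hEeq⟩ := hmem
    have hED : E = D := hΘinj hEeq
    subst hED
    exact hE
  rw [Finsupp.mem_span_range_iff_exists_finsupp] at hDmem
  obtain ⟨c, hc⟩ := hDmem
  set B : Module.End k n := c.sum fun i a => a • D ^ (p ^ (i + 1) - 2) with hB
  have hp2 : 2 ≤ p := (Fact.out : p.Prime).two_le
  have hDB : D = D ^ 2 * B := by
    conv_lhs => rw [← hc]
    rw [hB, Finsupp.mul_sum]
    refine Finsupp.sum_congr fun i _ => ?_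
    have h2 : 2 ≤ p ^ (i + 1) := le_trans hp2 (Nat.le_self_pow (Nat.succ_ne_zero i) p)
    rw [mul_smul_comm, ← pow_add]
    congr 2
    omega
  have key3 : ∀ j : ℕ, D = D ^ (j + 1) * B ^ j := by
    intro j
    induction j with
    | zero => simp
    | succ j ih =>
      calc D = D ^ (j + 1) * B ^ j := ih
        _ = (D ^ j * D) * B ^ j := by rw [pow_succ]
        _ = (D ^ j * (D ^ 2 * B)) * B ^ j := by rw [← hDB]
        _ = (D ^ j * D ^ 2) * (B * B ^ j) := by simp only [mul_assoc]
        _ = D ^ (j + 2) * B ^ (j + 1) := by rw [← pow_add, ← pow_succ']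
  obtain ⟨N, hN⟩ := hDnil
  have hD0 : D = 0 := by
    have := key3 N
    rwa [pow_succ, hN, zero_mul, zero_mul] at this
  intro y hyn
  have : ⁅x, y⁆ = ((D ⟨y, hyn⟩ : n) : L) := by
    simp [hD, hX, LieAlgebra.ad_apply]
  rw [this, hD0]
  simp

lemma span_pairwise_lie_zero {S : Set L} (h : ∀ a ∈ S, ∀ b ∈ S, ⁅a, b⁆ = (0 : L)) :
    ∀ u ∈ Submodule.span k S, ∀ v ∈ Submodule.span k S, ⁅u, v⁆ = (0 : L) := by
  have step : ∀ a ∈ S, ∀ v ∈ Submodule.span k S, ⁅a, v⁆ = (0 : L) := by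
    intro a ha v hv
    induction hv using Submodule.span_induction with
    | mem z hz => exact h a ha z hz
    | zero => simp
    | add y z hy hz ihy ihz => rw [lie_add, ihy, ihz, add_zero]
    | smul c y hy ihy => rw [lie_smul, ihy, smul_zero]
  intro u hu v hv
  induction hu using Submodule.span_induction with
  | mem z hz => exact step z hz v hv
  | zero => simp
  | add y z hy hz ihy ihz => rw [add_lie, ihy, ihz, add_zero]
  | smul c y hy ihy => rw [smul_lie, ihy, smul_zero]

end Aux

/-- Let `g` be a finite-dimensional restricted Lie algebra over an
algebraically closed field of characteristic `p > 0`, `t` a torus of maximal dimension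
`μ(g)`, and `n` a nilpotent restricted subalgebra of dimension `rk(g)` containing `t`
as its unique maximal torus. Then for `ℓ = rk(g) - μ(g)`, the map `x ↦ x^{[p]^ℓ}`
sends `n` onto `t`; in particular `x^{[p]^ℓ} ∈ t` for every `x ∈ n`. -/
theorem stmt0 {k L : Type*} [Field k] [IsAlgClosed k] [LieRing L] [LieAlgebra k L]
    [Module.Finite k L] (p : ℕ) [Fact p.Prime] [CharP k p]
    (P : PMapStruct k L p)
    (t n h : LieSubalgebra k L)
    -- `h` is a Cartan subalgebra of minimal dimension, so `rk(g) = finrank k h`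
    (hh : h.IsCartanSubalgebra)
    (hmin : ∀ h' : LieSubalgebra k L, h'.IsCartanSubalgebra →
      finrank k h ≤ finrank k h')
    -- `t` is a torus of maximal dimension, so `μ(g) = finrank k t`
    (ht : IsTorus P t)
    (hmax : ∀ t' : LieSubalgebra k L, IsTorus P t' → finrank k t' ≤ finrank k t)
    -- `n` is a nilpotent restricted subalgebra of dimension `rk(g)`
    (hnP : ∀ x ∈ n, P.toFun x ∈ n)
    (hnnil : LieRing.IsNilpotent n)
    (hdim : finrank k n = finrank k h)
    -- containing `t` as its unique maximal torus
    (htn : t ≤ n)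
    (huniq : ∀ t' : LieSubalgebra k L, IsTorus P t' → t' ≤ n → t' ≤ t)
    (ℓ : ℕ) (hℓ : ℓ = finrank k h - finrank k t) :
    (∀ x ∈ n, P.toFun^[ℓ] x ∈ t) ∧ ∀ y ∈ t, ∃ x ∈ n, P.toFun^[ℓ] x = y := by
  classical
  -- `t` is central in `n`
  have hcent : ∀ x ∈ t, ∀ y ∈ n, ⁅x, y⁆ = 0 := central P htn hnnil ht.2
  have htab : ∀ u ∈ t.toSubmodule, ∀ v ∈ t.toSubmodule, ⁅u, v⁆ = (0 : L) :=
    fun u hu v hv => hcent u hu v (htn hv)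
  have htst : ∀ v ∈ t.toSubmodule, P.toFun v ∈ t.toSubmodule := fun v hv => ht.1 v hv
  have htsur : t.toSubmodule ≤ Submodule.span k (P.toFun '' (t.toSubmodule : Set L)) := by
    intro v hv
    have hsub : (Set.range fun i : ℕ => P.toFun^[i + 1] v)
        ⊆ (Submodule.span k (P.toFun '' (t.toSubmodule : Set L)) : Set L) := by
      rintro _ ⟨i, rfl⟩
      exact Submodule.subset_span ⟨P.toFun^[i] v, iter_mem P t.toSubmodule htst i v hv,
        (Function.iterate_succ_apply' P.toFun i v).symm⟩
    exact Submodule.span_le.mpr hsub (ht.2 v hv)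
  -- Part 2
  have part2 : ∀ y ∈ t, ∃ x ∈ n, P.toFun^[ℓ] x = y := by
    have hpre := exists_preimage P t.toSubmodule htab htsur
    have hiter : ∀ (m : ℕ), ∀ y ∈ t.toSubmodule, ∃ x ∈ t.toSubmodule, P.toFun^[m] x = y := by
      intro m
      induction m with
      | zero => intro y hy; exact ⟨y, hy, rfl⟩
      | succ m ih =>
        intro y hy
        obtain ⟨v, hv, hveq⟩ := hpre y hy
        obtain ⟨x, hx, hxeq⟩ := ih v hv
        exact ⟨x, hx, by rw [Function.iterate_succ_apply', hxeq, hveq]⟩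
    intro y hy
    obtain ⟨x, hx, hxeq⟩ := hiter ℓ y hy
    exact ⟨x, htn hx, hxeq⟩
  -- Part 1
  have part1 : ∀ x ∈ n, P.toFun^[ℓ] x ∈ t := by
    intro x hxn
    have hxs : ∀ i : ℕ, P.toFun^[i] x ∈ n := by
      intro i
      induction i with
      | zero => simpa using hxn
      | succ i ih => rw [Function.iterate_succ_apply']; exact hnP _ ih
    set G : ℕ → Set L := fun j =>
      (t.toSubmodule : Set L) ∪ Set.range (fun i : ℕ => P.toFun^[j + i] x) with hG
    set Nn : ℕ → Submodule k L := fun j => Submodule.span k (G j) with hNn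
    have hGW : ∀ j, G j ⊆ G 0 := by
      intro j
      rintro z (hz | ⟨i, rfl⟩)
      · exact Or.inl hz
      · exact Or.inr ⟨j + i, by simp⟩
    have hNle : ∀ j, Nn j ≤ Nn 0 := fun j => Submodule.span_mono (hGW j)
    have hpair : ∀ a ∈ G 0, ∀ b ∈ G 0, ⁅a, b⁆ = (0 : L) := by
      rintro a (ha | ⟨i, rfl⟩) b (hb | ⟨i', rfl⟩)
      · exact hcent a ha b (htn hb)
      · exact hcent a ha _ (hxs _)
      · rw [← lie_skew, hcent b hb _ (hxs _), neg_zero]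
      · exact iter_comm P x _ _
    have habW : ∀ u ∈ Nn 0, ∀ v ∈ Nn 0, ⁅u, v⁆ = (0 : L) := span_pairwise_lie_zero hpair
    have hGsub : ∀ j, G j ⊆ (Nn 0 : Set L) := fun j z hz => Submodule.subset_span (hGW j hz)
    -- each Nn j is P-stable
    have hstj : ∀ j, ∀ v ∈ Nn j, P.toFun v ∈ Nn j := by
      intro j v hv
      have h1 : P.toFun v ∈ Submodule.span k (P.toFun '' G j) :=
        gspan P (Nn 0) habW (hGsub j) hv
      have h2 : P.toFun '' G j ⊆ (Nn j : Set L) := by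
        rintro _ ⟨z, hz | ⟨i, rfl⟩, rfl⟩
        · exact Submodule.subset_span (Or.inl (htst z hz))
        · refine Submodule.subset_span (Or.inr ⟨i + 1, ?_⟩)
          show P.toFun^[j + (i + 1)] x = P.toFun (P.toFun^[j + i] x)
          rw [show j + (i + 1) = (j + i) + 1 by omega]
          exact Function.iterate_succ_apply' P.toFun (j + i) x
      exact Submodule.span_le.mpr h2 h1
    -- antitone
    have hmono : ∀ j, Nn (j + 1) ≤ Nn j := by
      intro j
      refine Submodule.span_mono ?_
      rintro z (hz | ⟨i, rfl⟩)
      · exact Or.inl hz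
      · refine Or.inr ⟨i + 1, ?_⟩
        show P.toFun^[j + (i + 1)] x = P.toFun^[(j + 1) + i] x
        rw [show j + (i + 1) = (j + 1) + i by omega]
    -- stabilization
    obtain ⟨j₀, hj₀⟩ : ∃ j, Nn (j + 1) = Nn j := by
      by_contra hcon
      push_neg at hcon
      have hlt : ∀ j, finrank k (Nn (j + 1)) < finrank k (Nn j) := fun j =>
        Submodule.finrank_lt_finrank_of_lt (lt_of_le_of_ne (hmono j) (hcon j))
      have hbound : ∀ j, finrank k (Nn j) + j ≤ finrank k (Nn 0) := by
        intro j
        induction j with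
        | zero => simp
        | succ j ih => have := hlt j; omega
      have := hbound (finrank k (Nn 0) + 1)
      omega
    have habM : ∀ u ∈ Nn j₀, ∀ v ∈ Nn j₀, ⁅u, v⁆ = (0 : L) :=
      fun u hu v hv => habW u (hNle j₀ hu) v (hNle j₀ hv)
    -- t-part of the generators lies in the span of the image
    have htleN : ∀ j, t.toSubmodule ≤ Nn j := fun j z hz => Submodule.subset_span (Or.inl hz)
    have htimg : (t.toSubmodule : Set L)
        ⊆ (Submodule.span k (P.toFun '' (Nn j₀ : Set L)) : Set L) := by
      intro z hz
      have hsub : (Set.range fun i : ℕ => P.toFun^[i + 1] z)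
          ⊆ (Submodule.span k (P.toFun '' (Nn j₀ : Set L)) : Set L) := by
        rintro _ ⟨i, rfl⟩
        exact Submodule.subset_span ⟨P.toFun^[i] z,
          htleN j₀ (iter_mem P t.toSubmodule htst i z hz),
          (Function.iterate_succ_apply' P.toFun i z).symm⟩
      exact Submodule.span_le.mpr hsub (ht.2 z hz)
    have hsucc_le : Nn (j₀ + 1) ≤ Submodule.span k (P.toFun '' (Nn j₀ : Set L)) := by
      refine Submodule.span_le.mpr ?_
      rintro z (hz | ⟨i, rfl⟩)
      · exact htimg hz
      · refine Submodule.subset_span ⟨P.toFun^[j₀ + i] x,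
          Submodule.subset_span (Or.inr ⟨i, rfl⟩), ?_⟩
        show P.toFun (P.toFun^[j₀ + i] x) = P.toFun^[(j₀ + 1) + i] x
        rw [show (j₀ + 1) + i = (j₀ + i) + 1 by omega]
        exact (Function.iterate_succ_apply' P.toFun (j₀ + i) x).symm
    have hsurM : Nn j₀ ≤ Submodule.span k (P.toFun '' (Nn j₀ : Set L)) := by
      refine Submodule.span_le.mpr ?_
      rintro z (hz | ⟨i, rfl⟩)
      · exact htimg hz
      · cases i with
        | zero =>
          have hz0 : P.toFun^[j₀ + 0] x ∈ Nn (j₀ + 1) := by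
            rw [hj₀]
            exact Submodule.subset_span (Or.inr ⟨0, rfl⟩)
          exact hsucc_le hz0
        | succ i =>
          refine Submodule.subset_span ⟨P.toFun^[j₀ + i] x,
            Submodule.subset_span (Or.inr ⟨i, rfl⟩), ?_⟩
          show P.toFun (P.toFun^[j₀ + i] x) = P.toFun^[j₀ + (i + 1)] x
          rw [show j₀ + (i + 1) = (j₀ + i) + 1 by omega]
          exact (Function.iterate_succ_apply' P.toFun (j₀ + i) x).symm
    -- the torus associated with `Nn j₀`
    let T' : LieSubalgebra k L :=
      { Nn j₀ with
        lie_mem' := by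
          intro a b ha hb
          have h0 : ⁅a, b⁆ = (0 : L) := habM a ha b hb
          show ⁅a, b⁆ ∈ Nn j₀
          rw [h0]
          exact (Nn j₀).zero_mem }
    have hT'mem : ∀ z : L, z ∈ T' ↔ z ∈ Nn j₀ := fun z => Iff.rfl
    have hT'torus : IsTorus P T' := by
      constructor
      · intro v hv
        exact hstj j₀ v hv
      · intro v hv
        exact semi_main P (Nn j₀) habM (hstj j₀) hsurM v hv
    have hT'n : T' ≤ n := by
      intro z hz
      have hle : Nn j₀ ≤ n.toSubmodule := by
        refine Submodule.span_le.mpr ?_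
        rintro z' (hz' | ⟨i, rfl⟩)
        · exact htn hz'
        · exact hxs _
      exact hle hz
    have hT't : T' ≤ t := huniq T' hT'torus hT'n
    have hxm : P.toFun^[j₀] x ∈ t.toSubmodule := by
      have : P.toFun^[j₀] x ∈ Nn j₀ := by
        refine Submodule.subset_span (Or.inr ⟨0, ?_⟩)
        simp
      exact hT't this
    -- the chain of submodules C j
    have hiter0 : ∀ j : ℕ, P.toFun^[j] (0 : L) = 0 := fun j =>
      Function.iterate_fixed (pzero P) j
    set C : ℕ → Submodule k L := fun j =>
      { carrier := {v | v ∈ Nn 0 ∧ P.toFun^[j] v ∈ t.toSubmodule}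
        add_mem' := fun {a b} ha hb => ⟨(Nn 0).add_mem ha.1 hb.1, by
          rw [iter_add P (Nn 0) habW (hstj 0) j a ha.1 b hb.1]
          exact t.toSubmodule.add_mem ha.2 hb.2⟩
        zero_mem' := ⟨(Nn 0).zero_mem, by
          rw [hiter0 j]
          exact t.toSubmodule.zero_mem⟩
        smul_mem' := fun c a ha => ⟨(Nn 0).smul_mem c ha.1, by
          rw [iter_smul P j c a]
          exact t.toSubmodule.smul_mem _ ha.2⟩ } with hCdef
    have hCmem : ∀ j v, v ∈ C j ↔ v ∈ Nn 0 ∧ P.toFun^[j] v ∈ t.toSubmodule :=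
      fun j v => Iff.rfl
    have hCleN : ∀ j, C j ≤ Nn 0 := fun j v hv => hv.1
    have hCmono : ∀ j, C j ≤ C (j + 1) := by
      intro j v hv
      refine ⟨hv.1, ?_⟩
      rw [Function.iterate_succ_apply']
      exact htst _ hv.2
    have hCmono' : ∀ a i, C a ≤ C (a + i) := by
      intro a i
      induction i with
      | zero => exact le_rfl
      | succ i ih => exact le_trans ih (hCmono (a + i))
    have hCstep : ∀ j, C j = C (j + 1) → C (j + 1) = C (j + 2) := by
      intro j hEq
      refine le_antisymm (hCmono (j + 1)) ?_
      intro v hv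
      have hPv : P.toFun v ∈ C (j + 1) := by
        refine ⟨hstj 0 v hv.1, ?_⟩
        rw [← Function.iterate_succ_apply P.toFun (j + 1) v]
        exact hv.2
      rw [← hEq] at hPv
      refine ⟨hv.1, ?_⟩
      rw [Function.iterate_succ_apply P.toFun j v]
      exact hPv.2
    have hCeq : ∀ j, C j = C (j + 1) → ∀ i, C j = C (j + i) := by
      intro j hEq i
      induction i with
      | zero => rfl
      | succ i ih =>
        have hprop : ∀ i', C (j + i') = C (j + i' + 1) := by
          intro i'
          induction i' with
          | zero => exact hEq
          | succ i' ih' => exact hCstep (j + i') ih'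
        rw [ih, hprop i]
        rfl
    -- C j₀ is everything
    have hCtop : Nn 0 ≤ C j₀ := by
      refine Submodule.span_le.mpr ?_
      rintro z (hz | ⟨i, rfl⟩)
      · exact ⟨Submodule.subset_span (Or.inl hz), iter_mem P t.toSubmodule htst j₀ z hz⟩
      · refine ⟨Submodule.subset_span (Or.inr ⟨i, rfl⟩), ?_⟩
        have h1 : P.toFun^[j₀] (P.toFun^[0 + i] x) = P.toFun^[i] (P.toFun^[j₀] x) := by
          rw [← Function.iterate_add_apply, ← Function.iterate_add_apply]
          congr 1
          omega
        rw [h1]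
        exact iter_mem P t.toSubmodule htst i _ hxm
    have hCtop' : C j₀ = Nn 0 := le_antisymm (hCleN j₀) hCtop
    -- dimension bookkeeping
    have hfin1 : finrank k t.toSubmodule ≤ finrank k n.toSubmodule :=
      Submodule.finrank_mono htn
    have hfin2 : finrank k (Nn 0) ≤ finrank k n.toSubmodule := by
      refine Submodule.finrank_mono ?_
      refine Submodule.span_le.mpr ?_
      rintro z (hz | ⟨i, rfl⟩)
      · exact htn hz
      · exact hxs _
    have hfrt : finrank k t.toSubmodule = finrank k t := rfl
    have hfrn : finrank k n.toSubmodule = finrank k n := rfl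
    -- the chain claim
    have hclaim : ∀ j, C j = Nn 0 ∨ finrank k t.toSubmodule + j ≤ finrank k (C j) := by
      intro j
      induction j with
      | zero =>
        right
        have hle : t.toSubmodule ≤ C 0 := by
          intro v hv
          exact ⟨htleN 0 hv, by simpa using hv⟩
        simpa using Submodule.finrank_mono hle
      | succ j ih =>
        rcases ih with hl | hr
        · left
          exact le_antisymm (hCleN (j + 1)) (le_trans (le_of_eq hl.symm) (hCmono j))
        · by_cases hEq : C j = C (j + 1)
          · left
            have hj0 : C j = Nn 0 := by
              rcases le_total j j₀ with hle | hle
              · have : C j = C (j + (j₀ - j)) := hCeq j hEq (j₀ - j)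
                rw [show j + (j₀ - j) = j₀ by omega] at this
                rw [this, hCtop']
              · have h1 : C j₀ ≤ C (j₀ + (j - j₀)) := hCmono' j₀ (j - j₀)
                rw [show j₀ + (j - j₀) = j by omega] at h1
                exact le_antisymm (hCleN j) (le_trans (le_of_eq hCtop'.symm) h1)
            exact le_antisymm (hCleN (j + 1)) (le_trans (le_of_eq hj0.symm) (hCmono j))
          · right
            have hlt : finrank k (C j) < finrank k (C (j + 1)) :=
              Submodule.finrank_lt_finrank_of_lt (lt_of_le_of_ne (hCmono j) hEq)
            omega
    -- conclude
    have hxW : x ∈ Nn 0 := by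
      refine Submodule.subset_span (Or.inr ⟨0, ?_⟩)
      simp
    have hfinal : C ℓ = Nn 0 := by
      rcases hclaim ℓ with hl | hr
      · exact hl
      · refine le_antisymm (hCleN ℓ) ?_
        refine le_of_eq (Submodule.eq_of_le_of_finrank_le (hCleN ℓ) ?_).symm
        have hth : finrank k t ≤ finrank k h := by
          rw [← hdim]
          rw [hfrt, hfrn] at hfin1
          exact hfin1
        have hge : finrank k t.toSubmodule + ℓ ≥ finrank k n.toSubmodule := by
          rw [hfrn, hfrt, hdim, hℓ]
          omega
        omega
    have : x ∈ C ℓ := by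
      rw [hfinal]
      exact hxW
    exact this.2
  exact ⟨part1, part2⟩
end

section
/- Let k be a field of characteristic p ≥ 3, n ≥ 2, and A_n = k[X_1,…,X_n]/(X_1^p,…,X_n^p) with canonical generators x_1,…,x_n. Define the divergence Div : W(n) → A_n by Div(∑_j f_j ∂_j) = ∑_j ∂_j(f_j), where W(n) = Der_k(A_n). Then the map σ_n : W(n−1) → W(n) given by σ_n(D) = D − Div(D) x_n ∂_n is an injective homomorphism of Lie algebras whose image has divergence zero, and moreover σ_n commutes with p-th powers: σ_n(D)^p = σ_n(D^{[p]}) where D^{[p]} is the p-th power of D as a derivation. -/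
open MvPolynomial

set_option synthInstance.maxHeartbeats 1000000
set_option maxHeartbeats 2000000

/-- The truncated polynomial algebra `A_n = k[X_1,…,X_n]/(X_1^p,…,X_n^p)`. -/
abbrev TruncA (k : Type*) [CommRing k] (n p : ℕ) : Type _ :=
  MvPolynomial (Fin n) k ⧸
    Ideal.span (Set.range fun i : Fin n => (X i : MvPolynomial (Fin n) k) ^ p)

/-- The canonical generators `x_i` of `A_n`. -/
noncomputable def xg {k : Type*} [CommRing k] {n p : ℕ} (i : Fin n) : TruncA k n p :=
  Ideal.Quotient.mk _ (X i)


/-- The subset `W(n-1) ⊆ W(n)`: derivations `D` with `D(x_n) = 0` whose coefficients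
`D(x_j)` lie in the subalgebra generated by `x_1, …, x_{n-1}`. -/
def Wprev {k : Type*} [Field k] {n p : ℕ}
    (D : Derivation k (TruncA k (n + 1) p) (TruncA k (n + 1) p)) : Prop :=
  D (xg (Fin.last n)) = 0 ∧
    ∀ j : Fin (n + 1), D (xg j) ∈
      Algebra.adjoin k (Set.range fun i : Fin n => (xg (Fin.castSucc i) : TruncA k (n + 1) p))


section Aux

variable {k : Type*} [Field k] {N p : ℕ}

local notation "RR" => MvPolynomial (Fin N) k
local notation "II" => Ideal.span (Set.range fun i : Fin N => (X i : MvPolynomial (Fin N) k) ^ p)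
local notation "AA" => TruncA k N p

lemma adjoin_xg_top : Algebra.adjoin k (Set.range (xg : Fin N → AA)) = ⊤ := by
  have h : Set.range (xg : Fin N → AA)
      = (Ideal.Quotient.mkₐ k II) '' (Set.range (X : Fin N → RR)) := by
    rw [← Set.range_comp]; rfl
  rw [h, ← AlgHom.map_adjoin, MvPolynomial.adjoin_range_X, Algebra.map_top]
  rw [AlgHom.range_eq_top]
  exact Ideal.Quotient.mkₐ_surjective k _

lemma derivation_ext {D E : Derivation k AA AA}
    (h : ∀ j, D (xg j) = E (xg j)) : D = E :=
  Derivation.ext_of_adjoin_eq_top _ adjoin_xg_top (by rintro _ ⟨j, rfl⟩; exact h j)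

lemma deriv_zero_on_adjoin {s : Set AA} (D : Derivation k AA AA)
    (h : ∀ x ∈ s, D x = 0) {a : AA} (ha : a ∈ Algebra.adjoin k s) : D a = 0 := by
  have : Set.EqOn (⇑D) (⇑(0 : Derivation k AA AA)) s := fun x hx => by
    simpa using h x hx
  simpa using Derivation.eqOn_adjoin this ha

lemma deriv_mem_adjoin {s : Set AA} (D : Derivation k AA AA)
    (h : ∀ x ∈ s, D x ∈ Algebra.adjoin k s) {a : AA} (ha : a ∈ Algebra.adjoin k s) :
    D a ∈ Algebra.adjoin k s := by
  induction ha using Algebra.adjoin_induction with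
  | mem x hx => exact h x hx
  | algebraMap r => rw [Derivation.map_algebraMap]; exact Subalgebra.zero_mem _
  | add x y hx hy ihx ihy => rw [map_add]; exact add_mem ihx ihy
  | mul x y hx hy ihx ihy =>
      rw [Derivation.leibniz, smul_eq_mul, smul_eq_mul]
      exact add_mem (mul_mem hx ihy) (mul_mem hy ihx)

lemma derivation_sum_apply {ι : Type*} (s : Finset ι) (f : ι → Derivation k AA AA) (a : AA) :
    (∑ i ∈ s, f i) a = ∑ i ∈ s, f i a := by
  induction s using Finset.cons_induction with
  | empty => simp
  | cons i s hi ih => rw [Finset.sum_cons, Finset.sum_cons, Derivation.add_apply, ih]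

lemma deriv_expand (pd : Fin N → Derivation k AA AA)
    (hpd : ∀ i j, pd i (xg j) = if j = i then 1 else 0)
    (D : Derivation k AA AA) (a : AA) :
    D a = ∑ i, D (xg i) * pd i a := by
  have hD : D = ∑ i, D (xg i) • pd i := by
    refine derivation_ext fun j => ?_
    rw [derivation_sum_apply]
    have : ∀ i, (D (xg i) • pd i) (xg j) = if j = i then D (xg i) else 0 := by
      intro i
      rw [Derivation.smul_apply, hpd, smul_eq_mul, mul_ite, mul_one, mul_zero]
    simp_rw [this]
    rw [Finset.sum_ite_eq, if_pos (Finset.mem_univ j)]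
  conv_lhs => rw [hD]
  rw [derivation_sum_apply]
  simp_rw [Derivation.smul_apply, smul_eq_mul]

/-- The top exponent vector `(p-1, …, p-1)`. -/
noncomputable def topM (N p : ℕ) : Fin N →₀ ℕ := Finsupp.equivFunOnFinite.symm fun _ => p - 1

@[simp] lemma topM_apply (i : Fin N) : topM N p i = p - 1 := rfl

lemma span_le_ker (hp1 : 1 ≤ p) :
    (II).restrictScalars k ≤ LinearMap.ker (lcoeff k (topM N p)) := by
  intro x hx
  rw [Submodule.restrictScalars_mem] at hx
  rw [LinearMap.mem_ker, lcoeff_apply]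
  have key : ∀ x ∈ (II), ∀ r : RR, coeff (topM N p) (r * x) = 0 := by
    intro x hx
    induction hx using Submodule.span_induction with
    | mem y hy =>
        obtain ⟨i, rfl⟩ := hy
        intro r
        show coeff (topM N p) (r * X i ^ p) = 0
        rw [X_pow_eq_monomial, coeff_mul_monomial']
        rw [if_neg]
        intro hle
        have := (Finsupp.single_le_iff).mp hle
        simp only [topM_apply] at this
        omega
    | zero => intro r; rw [mul_zero, coeff_zero]
    | add y z hy hz ihy ihz => intro r; rw [mul_add, coeff_add, ihy r, ihz r, add_zero]
    | smul c y hy ihy => intro r; rw [smul_eq_mul, ← mul_assoc, ihy (r * c)]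
  have := key x hx 1
  rwa [one_mul] at this

/-- The linear functional on `TruncA` picking the coefficient of the top monomial. -/
noncomputable def phi (hp1 : 1 ≤ p) : AA →ₗ[k] k :=
  (Submodule.liftQ ((II).restrictScalars k) (lcoeff k (topM N p)) (span_le_ker hp1)).comp
    ((Submodule.Quotient.restrictScalarsEquiv k (II : Submodule RR RR)).symm.toLinearMap)

lemma phi_mk (hp1 : 1 ≤ p) (f : RR) : (phi hp1 (Ideal.Quotient.mk (II) f) : k) = coeff (topM N p) f := by
  have h1 : (Submodule.Quotient.restrictScalarsEquiv k (II : Submodule RR RR)).symm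
      (Ideal.Quotient.mk (II) f) = Submodule.Quotient.mk f := by
    rw [← Ideal.Quotient.mk_eq_mk]
    exact Submodule.Quotient.restrictScalarsEquiv_symm_mk k _ f
  simp only [phi, LinearMap.comp_apply, LinearEquiv.coe_toLinearMap, h1]
  rw [Submodule.liftQ_apply, lcoeff_apply]
lemma mk_C_eq (a : k) :
    (Ideal.Quotient.mk (II) (C a) : AA) = algebraMap k AA a := rfl

lemma pd_mk (P : Derivation k AA AA) (j : Fin N)
    (hP : ∀ j', P (xg j') = if j' = j then 1 else 0) (f : RR) :
    P (Ideal.Quotient.mk (II) f) = Ideal.Quotient.mk (II) (pderiv j f) := by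
  induction f using MvPolynomial.induction_on with
  | C a => rw [mk_C_eq, Derivation.map_algebraMap, pderiv_C, map_zero]
  | add f g hf hg => rw [map_add, map_add, hf, hg, map_add, map_add]
  | mul_X f i hf =>
      rw [map_mul]
      have hxi : (Ideal.Quotient.mk (II) (X i) : AA) = xg i := rfl
      rw [hxi, Derivation.leibniz, hf, hP i, Derivation.leibniz]
      rw [map_add, smul_eq_mul, smul_eq_mul, smul_eq_mul, smul_eq_mul, map_mul, map_mul, hxi]
      by_cases h : i = j
      · subst h
        rw [if_pos rfl, pderiv_X_self, map_one, mul_one]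
      · rw [if_neg h, pderiv_X_of_ne h, map_zero, mul_zero]
lemma coeff_top_pderiv [Fact p.Prime] [CharP k p] (j : Fin N) (f : RR) :
    coeff (topM N p) (pderiv j f) = 0 := by
  have hp1 : 1 ≤ p := (Fact.out : p.Prime).one_lt.le.trans' (by omega)
  induction f using MvPolynomial.induction_on' with
  | add f g hf hg => rw [map_add, coeff_add, hf, hg, add_zero]
  | monomial d a =>
      classical
      rw [pderiv_monomial, coeff_monomial]
      split_ifs with h
      · rcases Nat.eq_zero_or_pos (d j) with h0 | h1
        · rw [h0]; simp
        · have hle : Finsupp.single j 1 ≤ d := Finsupp.single_le_iff.mpr h1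
          have hd : d = topM N p + Finsupp.single j 1 := by
            rw [← h, tsub_add_cancel_of_le hle]
          have hdj : d j = p := by
            rw [hd]; simp only [Finsupp.add_apply, topM_apply, Finsupp.single_eq_same]
            omega
          rw [hdj, CharP.cast_eq_zero k p, mul_zero]
      · rfl

lemma phi_pd [Fact p.Prime] [CharP k p] (hp1 : 1 ≤ p) (P : Derivation k AA AA) (j : Fin N)
    (hP : ∀ j', P (xg j') = if j' = j then 1 else 0) (a : AA) : phi hp1 (P a) = 0 := by
  obtain ⟨f, rfl⟩ := Ideal.Quotient.mk_surjective a
  rw [pd_mk P j hP, phi_mk, coeff_top_pderiv]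

lemma phi_cocycle [Fact p.Prime] [CharP k p] (hp1 : 1 ≤ p)
    (pd : Fin N → Derivation k AA AA)
    (hpd : ∀ i j, pd i (xg j) = if j = i then 1 else 0)
    (D : Derivation k AA AA) (a : AA) :
    phi hp1 (D a + (∑ j, pd j (D (xg j))) * a) = 0 := by
  rw [deriv_expand pd hpd D a, Finset.sum_mul, ← Finset.sum_add_distrib, map_sum]
  refine Finset.sum_eq_zero fun i _ => ?_
  have key : D (xg i) * pd i a + pd i (D (xg i)) * a = pd i (D (xg i) * a) := by
    rw [Derivation.leibniz, smul_eq_mul, smul_eq_mul, mul_comm a]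
  rw [key, phi_pd hp1 (pd i) i (fun j' => hpd i j')]

lemma phi_nondeg [Fact p.Prime] [CharP k p] (hp1 : 1 ≤ p) (c : AA)
    (h : ∀ b, phi hp1 (c * b) = 0) : c = 0 := by
  obtain ⟨g, rfl⟩ := Ideal.Quotient.mk_surjective c
  have hco : ∀ γ : Fin N →₀ ℕ, γ ≤ topM N p → coeff γ g = 0 := by
    intro γ hγ
    have hh := h (Ideal.Quotient.mk (II) (monomial (topM N p - γ) 1))
    rw [← map_mul, phi_mk, coeff_mul_monomial', if_pos tsub_le_self,
      tsub_tsub_cancel_of_le hγ, mul_one] at hh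
    exact hh
  rw [Ideal.Quotient.eq_zero_iff_mem, ← support_sum_monomial_coeff g]
  refine Ideal.sum_mem _ fun d hd => ?_
  have hdn : ¬ d ≤ topM N p := fun hle => (mem_support_iff.mp hd) (hco d hle)
  obtain ⟨i, hi⟩ : ∃ i, ¬ d i ≤ p - 1 := by
    by_contra hall
    push_neg at hall
    exact hdn (Finsupp.le_def.mpr fun i => by simpa using hall i)
  have hpi : Finsupp.single i p ≤ d := Finsupp.single_le_iff.mpr (by omega)
  have hsplit : (monomial d (coeff d g) : RR)
      = (X i ^ p) * monomial (d - Finsupp.single i p) (coeff d g) := by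
    rw [X_pow_eq_monomial, monomial_mul, one_mul, add_tsub_cancel_of_le hpi]
  rw [hsplit]
  exact Ideal.mul_mem_right _ _ (Ideal.subset_span ⟨i, rfl⟩)
lemma iterate_leibniz {A : Type*} [CommRing A] [Algebra k A] (E : Derivation k A A)
    (m : ℕ) (a b : A) :
    (⇑E)^[m] (a * b) =
      ∑ i ∈ Finset.range (m + 1),
        m.choose i • ((⇑E)^[m - i] a * (⇑E)^[i] b) := by
  open Finset in
  induction m generalizing a b with
  | zero => simp
  | succ m IH =>
    have hmul : ∀ x y : A, E (x * y) = x * E y + y * E x := by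
      intro x y; rw [Derivation.leibniz, smul_eq_mul, smul_eq_mul]
    calc
      (⇑E)^[m + 1] (a * b) =
          E (∑ i ∈ range m.succ, m.choose i • ((⇑E)^[m - i] a * (⇑E)^[i] b)) := by
        rw [Function.iterate_succ_apply', IH]
      _ = (∑ i ∈ range m.succ, m.choose i • ((⇑E)^[m - i + 1] a * (⇑E)^[i] b)) +
          ∑ i ∈ range m.succ, m.choose i • ((⇑E)^[m - i] a * (⇑E)^[i + 1] b) := by
        rw [map_sum]
        simp_rw [map_nsmul, hmul, Function.iterate_succ_apply', smul_add, sum_add_distrib]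
        rw [add_comm]
        congr 1 <;>
          exact sum_congr rfl fun i _ => by rw [mul_comm]
      _ = (∑ i ∈ range m.succ,
                m.choose i.succ • ((⇑E)^[m - i] a * (⇑E)^[i + 1] b)) +
              1 • ((⇑E)^[m + 1] a * (⇑E)^[0] b) +
            ∑ i ∈ range m.succ, m.choose i • ((⇑E)^[m - i] a * (⇑E)^[i + 1] b) := ?_
      _ = ((∑ i ∈ range m.succ, m.choose i • ((⇑E)^[m - i] a * (⇑E)^[i + 1] b)) +
              ∑ i ∈ range m.succ,
                m.choose i.succ • ((⇑E)^[m - i] a * (⇑E)^[i + 1] b)) +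
            1 • ((⇑E)^[m + 1] a * (⇑E)^[0] b) := by
        rw [add_comm, add_assoc]
      _ = (∑ i ∈ range m.succ,
              (m + 1).choose (i + 1) • ((⇑E)^[m + 1 - (i + 1)] a * (⇑E)^[i + 1] b)) +
            1 • ((⇑E)^[m + 1] a * (⇑E)^[0] b) := by
        simp_rw [Nat.choose_succ_succ, Nat.succ_sub_succ, add_smul, sum_add_distrib]
      _ = ∑ i ∈ range m.succ.succ,
            m.succ.choose i • ((⇑E)^[m.succ - i] a * (⇑E)^[i] b) := by
        rw [sum_range_succ' _ m.succ, Nat.choose_zero_right, tsub_zero]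
    congr
    refine (Finset.sum_range_succ' _ _).trans (congr_arg₂ (· + ·) ?_ ?_)
    · rw [Finset.sum_range_succ, Nat.choose_succ_self, zero_smul, add_zero]
      refine Finset.sum_congr rfl fun i hi => ?_
      rw [Finset.mem_range] at hi
      have hmi : m - (i + 1) + 1 = m - i := by omega
      rw [hmi]
    · rw [Nat.choose_zero_right, tsub_zero]

lemma end_pow_leibniz_p {A : Type*} [CommRing A] [Algebra k A] [Fact p.Prime] [CharP k p]
    (E : Derivation k A A) (a b : A) :
    ((E : Module.End k A) ^ p) (a * b) =
      a * ((E : Module.End k A) ^ p) b + b * ((E : Module.End k A) ^ p) a := by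
  have hpr : p.Prime := Fact.out
  have hpow : ∀ (m : ℕ) (x : A), ((E : Module.End k A) ^ m) x = (⇑E)^[m] x := by
    intro m x
    rw [Module.End.pow_apply, Derivation.coeFn_coe]
  rw [hpow, iterate_leibniz, Finset.sum_range_succ, Nat.choose_self, one_smul,
    Nat.sub_self]
  have hrest : ∑ i ∈ Finset.range p, p.choose i • ((⇑E)^[p - i] a * (⇑E)^[i] b)
      = (⇑E)^[p] a * b := by
    rw [Finset.sum_eq_single_of_mem 0 (Finset.mem_range.mpr hpr.pos)]
    · rw [Nat.choose_zero_right, one_smul, Nat.sub_zero, Function.iterate_zero_apply]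
    · intro i hi hi0
      have hdvd : (p : ℕ) ∣ p.choose i := hpr.dvd_choose_self hi0 (Finset.mem_range.mp hi)
      have hc : ((p.choose i : ℕ) : A) = 0 := by
        rw [← map_natCast (algebraMap k A), (CharP.cast_eq_zero_iff k p _).mpr hdvd, map_zero]
      rw [nsmul_eq_mul, hc, zero_mul]
  rw [hrest, Function.iterate_zero_apply, hpow, hpow]
  ring

end Aux

/-- For `n ≥ 2`, the map `σ_n : W(n−1) → W(n)`,
`σ_n(D) = D − Div(D) x_n ∂_n`, is an injective Lie algebra homomorphism whose image
has divergence zero, and it commutes with `p`-th powers: `σ_n(D)^p = σ_n(D^{[p]})`. -/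
theorem stmt1 {k : Type*} [Field k] (p : ℕ) [Fact p.Prime] [CharP k p] (hp : 3 ≤ p)
    (n : ℕ) (hn : 1 ≤ n)  -- number of variables is `n + 1 ≥ 2`
    (pd : Fin (n + 1) → Derivation k (TruncA k (n + 1) p) (TruncA k (n + 1) p))
    (hpd : ∀ i j : Fin (n + 1), pd i (xg j) = if j = i then 1 else 0)
    (Div : Derivation k (TruncA k (n + 1) p) (TruncA k (n + 1) p) → TruncA k (n + 1) p)
    (hDiv : ∀ D, Div D = ∑ j : Fin (n + 1), pd j (D (xg j)))
    (σ : Derivation k (TruncA k (n + 1) p) (TruncA k (n + 1) p) →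
      Derivation k (TruncA k (n + 1) p) (TruncA k (n + 1) p))
    (hσ : ∀ D, σ D = D - (Div D * xg (Fin.last n)) • pd (Fin.last n)) :
    (∀ D E, Wprev D → Wprev E → σ D = σ E → D = E) ∧
    (∀ D E, Wprev D → Wprev E → σ ⁅D, E⁆ = ⁅σ D, σ E⁆) ∧
    (∀ D, Wprev D → Div (σ D) = 0) ∧
    ∀ (D Dp : Derivation k (TruncA k (n + 1) p) (TruncA k (n + 1) p)), Wprev D →
      ((Dp : Module.End k (TruncA k (n + 1) p)) = (D : Module.End k (TruncA k (n + 1) p)) ^ p) →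
      ((σ Dp : Module.End k (TruncA k (n + 1) p)) =
        (σ D : Module.End k (TruncA k (n + 1) p)) ^ p) := by
  have hp1 : 1 ≤ p := by omega
  set AA := TruncA k (n + 1) p with hAA
  set B := Algebra.adjoin k (Set.range fun i : Fin n => (xg (Fin.castSucc i) : AA)) with hBdef
  set Φ := phi (k := k) (N := n + 1) (p := p) hp1 with hΦdef
  have hco : ∀ (K : Derivation k AA AA) (a : AA), (K : Module.End k AA) a = K a :=
    fun K a => congrFun (Derivation.coeFn_coe K) a
  have hlast : ∀ i : Fin n, (Fin.castSucc i : Fin (n + 1)) ≠ Fin.last n :=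
    fun i => (Fin.castSucc_lt_last i).ne
  have hpdlast0 : ∀ i : Fin n, pd (Fin.last n) (xg (Fin.castSucc i)) = 0 := fun i => by
    rw [hpd]; exact if_neg (hlast i)
  have hpdB : ∀ a ∈ B, pd (Fin.last n) a = 0 := fun a ha =>
    deriv_zero_on_adjoin _ (by rintro _ ⟨i, rfl⟩; exact hpdlast0 i) ha
  have hpdmem : ∀ (j : Fin (n + 1)) (a : AA), a ∈ B → pd j a ∈ B := fun j a ha =>
    deriv_mem_adjoin _ (by
      rintro _ ⟨i, rfl⟩
      rw [hpd]
      split_ifs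
      · exact Subalgebra.one_mem _
      · exact Subalgebra.zero_mem _) ha
  have hDmem : ∀ D, Wprev D → ∀ a ∈ B, D a ∈ B := fun D hW a ha =>
    deriv_mem_adjoin _ (by rintro _ ⟨i, rfl⟩; exact hW.2 _) ha
  have hDivB : ∀ D, Wprev D → Div D ∈ B := fun D hW => by
    rw [hDiv]; exact Subalgebra.sum_mem _ fun j _ => hpdmem j _ (hW.2 j)
  have hσapp : ∀ D a, σ D a = D a - (Div D * xg (Fin.last n)) * pd (Fin.last n) a :=
    fun D a => by rw [hσ, Derivation.sub_apply, Derivation.smul_apply, smul_eq_mul]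
  have hσB : ∀ D, ∀ a ∈ B, σ D a = D a := fun D a ha => by
    rw [hσapp, hpdB a ha, mul_zero, sub_zero]
  have hσgen : ∀ D (i : Fin n), σ D (xg (Fin.castSucc i)) = D (xg (Fin.castSucc i)) :=
    fun D i => by rw [hσapp, hpdlast0 i, mul_zero, sub_zero]
  have hσlast : ∀ D, Wprev D → σ D (xg (Fin.last n)) = -(Div D * xg (Fin.last n)) :=
    fun D hW => by rw [hσapp, hW.1, hpd, if_pos rfl, mul_one, zero_sub]
  have part3 : ∀ D, Wprev D → Div (σ D) = 0 := by
    intro D hW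
    rw [hDiv, Fin.sum_univ_castSucc]
    have h1 : ∀ i : Fin n, pd (Fin.castSucc i) (σ D (xg (Fin.castSucc i)))
        = pd (Fin.castSucc i) (D (xg (Fin.castSucc i))) := fun i => by rw [hσgen]
    simp_rw [h1]
    rw [hσlast D hW, map_neg, Derivation.leibniz, smul_eq_mul, smul_eq_mul,
      hpd, if_pos rfl, mul_one, hpdB _ (hDivB D hW), mul_zero, add_zero]
    have h2 : Div D = ∑ i : Fin n, pd (Fin.castSucc i) (D (xg (Fin.castSucc i))) := by
      rw [hDiv, Fin.sum_univ_castSucc, hW.1, map_zero, add_zero]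
    rw [← h2, add_neg_cancel]
  have hcoc : ∀ (D : Derivation k AA AA) (a : AA), Φ (D a + Div D * a) = 0 := fun D a => by
    rw [hDiv]; exact phi_cocycle hp1 pd hpd D a
  have hphi0 : ∀ D, Div D = 0 → ∀ a, Φ (D a) = 0 := fun D h a => by
    have h0 := hcoc D a; rwa [h, zero_mul, add_zero] at h0
  have keyzero : ∀ (K : Derivation k AA AA) (δ : AA), δ ∈ B →
      (∀ i : Fin n, K (xg (Fin.castSucc i)) = 0) →
      K (xg (Fin.last n)) = δ * xg (Fin.last n) →
      (∀ a, Φ (K a) = 0) → K = 0 := by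
    intro K δ hδB hKc hKl hKΦ
    have hDivK : Div K = δ := by
      rw [hDiv, Fin.sum_univ_castSucc]
      have h1 : ∀ i : Fin n, pd (Fin.castSucc i) (K (xg (Fin.castSucc i))) = 0 :=
        fun i => by rw [hKc i, map_zero]
      simp_rw [h1]
      rw [Finset.sum_const_zero, zero_add, hKl, Derivation.leibniz, smul_eq_mul,
        smul_eq_mul, hpd, if_pos rfl, mul_one, hpdB δ hδB, mul_zero, add_zero]
    have hδ0 : δ = 0 := by
      refine phi_nondeg hp1 δ fun b => ?_
      have h0 := hcoc K b
      rw [hDivK, map_add, hKΦ b, zero_add] at h0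
      exact h0
    refine derivation_ext fun j => ?_
    refine Fin.lastCases ?_ ?_ j
    · rw [hKl, hδ0, zero_mul, Derivation.zero_apply]
    · intro i; rw [hKc i, Derivation.zero_apply]
  have hbr : ∀ D E : Derivation k AA AA, Wprev D → Wprev E → Wprev ⁅D, E⁆ := by
    intro D E hD hE
    constructor
    · rw [Derivation.commutator_apply, hD.1, hE.1, map_zero, map_zero, sub_zero]
    · intro j
      rw [Derivation.commutator_apply]
      exact sub_mem (hDmem D hD _ (hE.2 j)) (hDmem E hE _ (hD.2 j))
  refine ⟨?_, ?_, part3, ?_⟩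
  · -- injectivity
    intro D E hD hE h
    refine derivation_ext fun j => ?_
    refine Fin.lastCases ?_ ?_ j
    · rw [hD.1, hE.1]
    · intro i
      have h2 : σ D (xg (Fin.castSucc i)) = σ E (xg (Fin.castSucc i)) :=
        DFunLike.congr_fun h _
      rwa [hσgen, hσgen] at h2
  · -- Lie homomorphism
    intro D E hD hE
    have hKc : ∀ i : Fin n, (⁅σ D, σ E⁆ - σ ⁅D, E⁆) (xg (Fin.castSucc i)) = 0 := by
      intro i
      rw [Derivation.sub_apply, Derivation.commutator_apply, hσgen E i, hσgen D i,
        hσB D _ (hE.2 _), hσB E _ (hD.2 _), hσgen ⁅D, E⁆ i,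
        Derivation.commutator_apply, sub_self]
    have hKl : (⁅σ D, σ E⁆ - σ ⁅D, E⁆) (xg (Fin.last n))
        = (E (Div D) - D (Div E) + Div ⁅D, E⁆) * xg (Fin.last n) := by
      rw [Derivation.sub_apply, Derivation.commutator_apply,
        hσlast E hE, hσlast D hD, map_neg, map_neg, hσlast _ (hbr D E hD hE),
        Derivation.leibniz, Derivation.leibniz,
        hσlast D hD, hσlast E hE, hσB D _ (hDivB E hE), hσB E _ (hDivB D hD)]
      simp only [smul_eq_mul]
      ring
    have hδB : E (Div D) - D (Div E) + Div ⁅D, E⁆ ∈ B :=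
      add_mem (sub_mem (hDmem E hE _ (hDivB D hD)) (hDmem D hD _ (hDivB E hE)))
        (hDivB _ (hbr D E hD hE))
    have hΦK : ∀ a, Φ ((⁅σ D, σ E⁆ - σ ⁅D, E⁆) a) = 0 := by
      intro a
      rw [Derivation.sub_apply, map_sub, Derivation.commutator_apply, map_sub,
        hphi0 (σ D) (part3 D hD), hphi0 (σ E) (part3 E hE),
        hphi0 (σ ⁅D, E⁆) (part3 _ (hbr D E hD hE))]
      simp
    have hK0 := keyzero _ _ hδB hKc hKl hΦK
    exact (sub_eq_zero.mp hK0).symm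
  · -- p-th powers
    intro D Dp hD hDp
    have hp2 : p - 1 + 1 = p := by omega
    have hWDp : Wprev Dp := by
      constructor
      · have h0 : ∀ m : ℕ, ((D : Module.End k AA) ^ (m + 1)) (xg (Fin.last n)) = 0 := by
          intro m
          induction m with
          | zero => rw [pow_one, hco, hD.1]
          | succ m ih => rw [pow_succ', Module.End.mul_apply, ih, map_zero]
        have h1 := h0 (p - 1); rw [hp2] at h1
        calc Dp (xg (Fin.last n)) = (Dp : Module.End k AA) (xg (Fin.last n)) := (hco _ _).symm
          _ = ((D : Module.End k AA) ^ p) (xg (Fin.last n)) := by rw [hDp]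
          _ = 0 := h1
      · intro j
        have hpowB : ∀ (m : ℕ) (a : AA), a ∈ B → ((D : Module.End k AA) ^ m) a ∈ B := by
          intro m
          induction m with
          | zero => intro a ha; simpa using ha
          | succ m ih =>
              intro a ha
              rw [pow_succ', Module.End.mul_apply, hco]
              exact hDmem D hD _ (ih a ha)
        refine Fin.lastCases ?_ ?_ j
        · have h1 : ∀ m : ℕ, ((D : Module.End k AA) ^ (m + 1)) (xg (Fin.last n)) = 0 := by
            intro m
            induction m with
            | zero => rw [pow_one, hco, hD.1]
            | succ m ih => rw [pow_succ', Module.End.mul_apply, ih, map_zero]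
          have h2 := h1 (p - 1); rw [hp2] at h2
          have h3 : Dp (xg (Fin.last n)) = 0 := by
            rw [← hco, hDp, h2]
          rw [h3]; exact Subalgebra.zero_mem _
        · intro i
          have h3 : Dp (xg (Fin.castSucc i)) = ((D : Module.End k AA) ^ p) (xg (Fin.castSucc i)) := by
            rw [← hco, hDp]
          rw [h3]
          exact hpowB p _ (Algebra.subset_adjoin ⟨i, rfl⟩)
    set u := Div D with hu
    set T : Module.End k AA := (D : Module.End k AA) - LinearMap.mulLeft k u with hT
    have hBpow : ∀ (m : ℕ) (a : AA), a ∈ B →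
        ((D : Module.End k AA) ^ m) a ∈ B ∧
          ((σ D : Module.End k AA) ^ m) a = ((D : Module.End k AA) ^ m) a := by
      intro m
      induction m with
      | zero => intro a ha; exact ⟨by simpa using ha, by simp⟩
      | succ m ih =>
          intro a ha
          obtain ⟨h1, h2⟩ := ih a ha
          refine ⟨?_, ?_⟩
          · rw [pow_succ', Module.End.mul_apply, hco]
            exact hDmem D hD _ h1
          · rw [pow_succ', Module.End.mul_apply, pow_succ', Module.End.mul_apply, h2,
              hco, hco]
            exact hσB D _ h1
    have h4 : ∀ m : ℕ, ((σ D : Module.End k AA) ^ (m + 1)) (xg (Fin.last n))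
        = (T ^ m) (-u) * xg (Fin.last n) ∧ (T ^ m) (-u) ∈ B := by
      intro m
      induction m with
      | zero =>
          refine ⟨?_, ?_⟩
          · rw [pow_one, pow_zero, Module.End.one_apply, hco, hσlast D hD, hu]
            exact (neg_mul (_ : AA) _).symm
          · rw [pow_zero, Module.End.one_apply]
            exact neg_mem (hDivB D hD)
      | succ m ih =>
          obtain ⟨h1, h2⟩ := ih
          have hTm : T ((T ^ m) (-u)) = D ((T ^ m) (-u)) - u * (T ^ m) (-u) := by
            rw [hT, LinearMap.sub_apply, LinearMap.mulLeft_apply, hco]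
          refine ⟨?_, ?_⟩
          · rw [pow_succ', Module.End.mul_apply, h1, hco, Derivation.leibniz,
              smul_eq_mul, smul_eq_mul, hσlast D hD, hσB D _ h2,
              pow_succ', Module.End.mul_apply, hTm]
            ring
          · rw [pow_succ', Module.End.mul_apply, hTm]
            exact sub_mem (hDmem D hD _ h2) (mul_mem (hDivB D hD) h2)
    set F : Module.End k AA := (σ D : Module.End k AA) ^ p with hF
    have hFleib : ∀ a b : AA, F (a * b) = a * F b + b * F a := fun a b =>
      end_pow_leibniz_p (σ D) a b
    have hF1 : F 1 = 0 := by
      have h1 := hFleib 1 1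
      simp only [mul_one, one_mul] at h1
      exact add_eq_right.mp h1.symm
    set Fd : Derivation k AA AA :=
      { toLinearMap := F
        map_one_eq_zero' := hF1
        leibniz' := fun a b => by rw [hFleib, smul_eq_mul, smul_eq_mul] } with hFd
    have hFdapp : ∀ a, Fd a = F a := fun a => rfl
    set δ : AA := (T ^ (p - 1)) (-u) + Div Dp with hδ
    have hKc : ∀ i : Fin n, (Fd - σ Dp) (xg (Fin.castSucc i)) = 0 := by
      intro i
      have h1 := (hBpow p _ (Algebra.subset_adjoin (s := Set.range fun i : Fin n =>
        (xg (Fin.castSucc i) : AA)) ⟨i, rfl⟩)).2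
      rw [Derivation.sub_apply, hFdapp, hσgen Dp i, h1, ← hDp, hco, sub_self]
    have hKl : (Fd - σ Dp) (xg (Fin.last n)) = δ * xg (Fin.last n) := by
      have h1 := (h4 (p - 1)).1
      rw [hp2] at h1
      rw [Derivation.sub_apply, hFdapp, hσlast Dp hWDp, hδ]
      rw [show F (xg (Fin.last n)) = ((σ D : Module.End k AA) ^ p) (xg (Fin.last n)) from rfl, h1]
      ring
    have hδB : δ ∈ B := add_mem (h4 (p - 1)).2 (hDivB Dp hWDp)
    have hΦK : ∀ a, Φ ((Fd - σ Dp) a) = 0 := by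
      intro a
      rw [Derivation.sub_apply, map_sub, hphi0 (σ Dp) (part3 Dp hWDp), hFdapp]
      have e : (σ D : Module.End k AA) * (σ D : Module.End k AA) ^ (p - 1)
          = (σ D : Module.End k AA) ^ p := mul_pow_sub_one (by omega) _
      have h1 : F a = (σ D) (((σ D : Module.End k AA) ^ (p - 1)) a) := by
        rw [hF, ← e, Module.End.mul_apply, hco]
      rw [h1, hphi0 (σ D) (part3 D hD), sub_zero]
    have hK0 := keyzero _ _ hδB hKc hKl hΦK
    have hFdG : Fd = σ Dp := sub_eq_zero.mp hK0
    refine LinearMap.ext fun a => ?_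
    rw [hco]
    calc σ Dp a = Fd a := (DFunLike.congr_fun hFdG a).symm
      _ = F a := hFdapp a
      _ = ((σ D : Module.End k AA) ^ p) a := rfl
end

section
/- In the Poisson algebra P(2r) over a field of characteristic p ≥ 3, with p-mapping defined on monomials by (x^a)^{[p]} = x^a if a ∈ {0, ε_i + ε_{i+r} : i = 1,…,r} and (x^a)^{[p]} = 0 otherwise, the adjoint operator of t_i := x_i(1 + x_{i+r}) satisfies (ad t_i)^p = ad t_i, and t_i^{[p]} = t_i; consequently the elements t_1,…,t_r together with 1 span an (r+1)-dimensional torus of P(2r). -/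
open MvPolynomial

set_option synthInstance.maxHeartbeats 1000000
set_option maxHeartbeats 2000000

/-- Iterated bracket words in `x`, `y` with respect to a bracket operation `br`. -/
inductive IsWord {A : Type*} (br : A → A → A) (x y : A) : A → Prop
  | base_left : IsWord br x y x
  | base_right : IsWord br x y y
  | bracket {u v : A} : IsWord br x y u → IsWord br x y v → IsWord br x y (br u v)

/-- The monomial `x^a`. -/
noncomputable def xmon {k : Type*} [CommRing k] {n p : ℕ} (a : Fin n → ℕ) :
    TruncA k n p := ∏ i, xg i ^ a i

/-- The exponent vector `ε_i + ε_{i+r}` in `ℕ^{2r}`. -/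
def epsPair (r : ℕ) (i : Fin r) : Fin (r + r) → ℕ := fun j =>
  (if j = Fin.castAdd r i then 1 else 0) + (if j = Fin.natAdd r i then 1 else 0)

-- auxiliary lemmas
lemma castAdd_ne_natAdd {r : ℕ} (i j : Fin r) : Fin.castAdd r i ≠ Fin.natAdd r j := by
  intro h
  have := congrArg Fin.val h
  simp [Fin.coe_castAdd, Fin.coe_natAdd] at this
  omega

lemma castAdd_inj {r : ℕ} {i j : Fin r} : Fin.castAdd r i = Fin.castAdd r j ↔ i = j := by
  constructor
  · intro h; ext; have := congrArg Fin.val h; simpa using this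
  · rintro rfl; rfl

lemma natAdd_inj {r : ℕ} {i j : Fin r} : Fin.natAdd r i = Fin.natAdd r j ↔ i = j := by
  constructor
  · intro h; ext; have := congrArg Fin.val h; simp [Fin.coe_natAdd] at this; omega
  · rintro rfl; rfl

lemma xmon_zero {k : Type*} [CommRing k] {n p : ℕ} :
    (xmon (0 : Fin n → ℕ) : TruncA k n p) = 1 := by
  simp [xmon]

lemma xmon_single {k : Type*} [CommRing k] {n p : ℕ} (c : Fin n) :
    (xmon (fun j => if j = c then 1 else 0) : TruncA k n p) = xg c := by
  simp [xmon, pow_ite, Finset.prod_ite_eq']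

lemma xmon_pair {k : Type*} [CommRing k] {p r : ℕ} (i : Fin r) :
    (xmon (epsPair r i) : TruncA k (r + r) p)
      = xg (Fin.castAdd r i) * xg (Fin.natAdd r i) := by
  have h : ∀ j : Fin (r + r), (xg j : TruncA k (r + r) p) ^ (epsPair r i j)
      = (if j = Fin.castAdd r i then xg j else 1) * (if j = Fin.natAdd r i then xg j else 1) := by
    intro j
    unfold epsPair
    by_cases h1 : j = Fin.castAdd r i <;> by_cases h2 : j = Fin.natAdd r i
    · exact absurd (h1.symm.trans h2) (castAdd_ne_natAdd i i)
    · rw [if_pos h1, if_neg h2, if_pos h1, if_neg h2, add_zero, pow_one, mul_one]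
    · rw [if_neg h1, if_pos h2, if_neg h1, if_pos h2, zero_add, pow_one, one_mul]
    · rw [if_neg h1, if_neg h2, if_neg h1, if_neg h2, add_zero, pow_zero, one_mul]
  simp only [xmon, h, Finset.prod_mul_distrib, Finset.prod_ite_eq', Finset.mem_univ, if_true]

noncomputable def epsHom (k : Type*) [CommRing k] (n p : ℕ) (hp : p ≠ 0) :
    TruncA k n p →ₐ[k] k :=
  Ideal.Quotient.liftₐ _ (aeval fun _ => 0) (by
    intro a ha
    have hle : Ideal.span (Set.range fun i : Fin n => (X i : MvPolynomial (Fin n) k) ^ p)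
        ≤ RingHom.ker (aeval (R := k) (fun _ : Fin n => (0 : k))).toRingHom := by
      rw [Ideal.span_le]
      rintro _ ⟨i, rfl⟩
      simp [RingHom.mem_ker, zero_pow hp]
    exact hle ha)

lemma epsHom_xg {k : Type*} [CommRing k] {n p : ℕ} (hp : p ≠ 0) (i : Fin n) :
    epsHom k n p hp (xg i) = 0 := by
  show (aeval (R := k) fun _ : Fin n => (0 : k)) (X i) = 0
  simp

/-- In the Poisson algebra `P(2r)` with the `p`-mapping given on
monomials by `(x^a)^{[p]} = x^a` if `a ∈ {0, ε_i + ε_{i+r}}` and `0` otherwise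
(extended via Jacobson's formula), the elements `t_i = x_i (1 + x_{i+r})` satisfy
`(ad t_i)^p = ad t_i` and `t_i^{[p]} = t_i`; consequently `1, t_1, …, t_r` span an
`(r+1)`-dimensional torus of `P(2r)`. -/
theorem stmt4 {k : Type*} [Field k] [IsAlgClosed k] (p : ℕ) [Fact p.Prime] [CharP k p]
    (hp : 3 ≤ p) (r : ℕ)
    (pd : Fin (r + r) → Derivation k (TruncA k (r + r) p) (TruncA k (r + r) p))
    (hpd : ∀ i j : Fin (r + r), pd i (xg j) = if j = i then 1 else 0)
    (poisson : TruncA k (r + r) p → TruncA k (r + r) p → TruncA k (r + r) p)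
    (hpoisson : ∀ f g, poisson f g = ∑ i : Fin r,
      (pd (Fin.castAdd r i) f * pd (Fin.natAdd r i) g -
        pd (Fin.natAdd r i) f * pd (Fin.castAdd r i) g))
    -- the `p`-mapping of `P(2r)` with toral center
    (pm : TruncA k (r + r) p → TruncA k (r + r) p)
    (hsmul : ∀ (c : k) f, pm (c • f) = c ^ p • pm f)
    (had : ∀ f g, poisson (pm f) g = (fun h => poisson f h)^[p] g)
    (hjac : ∀ f g, pm (f + g) - pm f - pm g ∈ Submodule.span k
      {z | ∃ u v, IsWord poisson f g u ∧ IsWord poisson f g v ∧ z = poisson u v})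
    (hmon_one : pm (xmon (0 : Fin (r + r) → ℕ)) = xmon (0 : Fin (r + r) → ℕ))
    (hmon_pair : ∀ i : Fin r, pm (xmon (epsPair r i)) = xmon (epsPair r i))
    (hmon_zero : ∀ a : Fin (r + r) → ℕ, (∀ i, a i < p) → a ≠ 0 →
      (∀ i : Fin r, a ≠ epsPair r i) → pm (xmon a) = 0)
    -- the elements `t_i = x_i (1 + x_{i+r})` and the family `1, t_1, …, t_r`
    (t : Fin r → TruncA k (r + r) p)
    (htdef : ∀ i, t i = xg (Fin.castAdd r i) * (1 + xg (Fin.natAdd r i)))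
    (T : Fin (r + 1) → TruncA k (r + r) p) (hT : T = Fin.cons 1 t) :
    (∀ i : Fin r, (fun g => poisson (t i) g)^[p] = fun g => poisson (t i) g) ∧
    (∀ i : Fin r, pm (t i) = t i) ∧
    pm 1 = 1 ∧
    (∀ i j, poisson (T i) (T j) = 0) ∧
    LinearIndependent k T ∧
    Module.finrank k (Submodule.span k (Set.range T)) = r + 1 := by
  have hp0 : p ≠ 0 := by omega
  let A := TruncA k (r + r) p
  set ε := epsHom k (r + r) p hp0 with hε
  -- bilinearity of the Poisson bracket
  have hadd_l : ∀ a b g : A, poisson (a + b) g = poisson a g + poisson b g := by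
    intro a b g
    simp only [hpoisson, map_add, ← Finset.sum_add_distrib]
    exact Finset.sum_congr rfl fun _ _ => by ring
  have hadd_r : ∀ g a b : A, poisson g (a + b) = poisson g a + poisson g b := by
    intro g a b
    simp only [hpoisson, map_add, ← Finset.sum_add_distrib]
    exact Finset.sum_congr rfl fun _ _ => by ring
  have hsmul_l : ∀ (c : k) (a g : A), poisson (c • a) g = c • poisson a g := by
    intro c a g
    rw [hpoisson, hpoisson, Finset.smul_sum]
    refine Finset.sum_congr rfl fun m _ => ?_
    rw [Derivation.map_smul, Derivation.map_smul, smul_sub, smul_mul_assoc, smul_mul_assoc]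
  have hsmul_r : ∀ (c : k) (g a : A), poisson g (c • a) = c • poisson g a := by
    intro c g a
    rw [hpoisson, hpoisson, Finset.smul_sum]
    refine Finset.sum_congr rfl fun m _ => ?_
    rw [Derivation.map_smul, Derivation.map_smul, smul_sub, mul_smul_comm, mul_smul_comm]
  have hone_r : ∀ a : A, poisson a 1 = 0 := by
    intro a
    rw [hpoisson]
    exact Finset.sum_eq_zero fun _ _ => by
      rw [Derivation.map_one_eq_zero, Derivation.map_one_eq_zero, mul_zero, mul_zero, sub_zero]
  have hself : ∀ a : A, poisson a a = 0 := by
    intro a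
    rw [hpoisson]
    exact Finset.sum_eq_zero fun _ _ => by ring
  have hanti : ∀ u v : A, poisson u v = -poisson v u := by
    intro u v
    rw [hpoisson, hpoisson, ← Finset.sum_neg_distrib]
    exact Finset.sum_congr rfl fun _ _ => by ring
  -- specialized derivative values
  have hpdcc : ∀ m i : Fin r,
      pd (Fin.castAdd r m) (xg (Fin.castAdd r i) : A) = if i = m then 1 else 0 := by
    intro m i; rw [hpd]
    by_cases h : i = m
    · rw [if_pos (by rw [h]), if_pos h]
    · rw [if_neg (fun hc => h (castAdd_inj.mp hc)), if_neg h]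
  have hpdnc : ∀ m i : Fin r, pd (Fin.natAdd r m) (xg (Fin.castAdd r i) : A) = 0 := by
    intro m i; rw [hpd, if_neg (castAdd_ne_natAdd i m)]
  have hpdcn : ∀ m i : Fin r, pd (Fin.castAdd r m) (xg (Fin.natAdd r i) : A) = 0 := by
    intro m i; rw [hpd, if_neg (Ne.symm (castAdd_ne_natAdd m i))]
  have hpdnn : ∀ m i : Fin r,
      pd (Fin.natAdd r m) (xg (Fin.natAdd r i) : A) = if i = m then 1 else 0 := by
    intro m i; rw [hpd]
    by_cases h : i = m
    · rw [if_pos (by rw [h]), if_pos h]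
    · rw [if_neg (fun hc => h (natAdd_inj.mp hc)), if_neg h]
  -- derivatives of the product monomial g i = x_i x_{i+r}
  have hgc : ∀ m i : Fin r,
      pd (Fin.castAdd r m) (xg (Fin.castAdd r i) * xg (Fin.natAdd r i) : A)
        = if i = m then xg (Fin.natAdd r i) else 0 := by
    intro m i
    rw [Derivation.leibniz, smul_eq_mul, smul_eq_mul, hpdcc, hpdcn]
    by_cases h : i = m <;> simp [h]
  have hgn : ∀ m i : Fin r,
      pd (Fin.natAdd r m) (xg (Fin.castAdd r i) * xg (Fin.natAdd r i) : A)
        = if i = m then xg (Fin.castAdd r i) else 0 := by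
    intro m i
    rw [Derivation.leibniz, smul_eq_mul, smul_eq_mul, hpdnc, hpdnn]
    by_cases h : i = m <;> simp [h]
  -- derivatives of t i
  have htc : ∀ m i : Fin r,
      pd (Fin.castAdd r m) (t i) = if i = m then 1 + xg (Fin.natAdd r i) else 0 := by
    intro m i
    rw [htdef i, Derivation.leibniz, smul_eq_mul, smul_eq_mul, Derivation.map_add, Derivation.map_one_eq_zero,
      hpdcc, hpdcn]
    by_cases h : i = m <;> simp [h, mul_comm]
  have htn : ∀ m i : Fin r,
      pd (Fin.natAdd r m) (t i) = if i = m then xg (Fin.castAdd r i) else 0 := by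
    intro m i
    rw [htdef i, Derivation.leibniz, smul_eq_mul, smul_eq_mul, Derivation.map_add, Derivation.map_one_eq_zero,
      hpdnc, hpdnn]
    by_cases h : i = m <;> simp [h]
  -- key bracket computations
  have Bfg : ∀ i : Fin r, poisson (xg (Fin.castAdd r i))
      (xg (Fin.castAdd r i) * xg (Fin.natAdd r i)) = xg (Fin.castAdd r i) := by
    intro i
    rw [hpoisson]
    rw [Finset.sum_eq_single i]
    · rw [hpdcc, hpdnc, hgn]; simp
    · intro m _ hm
      rw [hpdcc, hpdnc, hgn]; simp [Ne.symm hm]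
    · intro h; exact absurd (Finset.mem_univ i) h
  have Bgg : ∀ i : Fin r, poisson (xg (Fin.castAdd r i) * xg (Fin.natAdd r i))
      (xg (Fin.castAdd r i) * xg (Fin.natAdd r i)) = 0 := fun i => hself _
  have Bfxn : ∀ i : Fin r,
      poisson (xg (Fin.castAdd r i)) (xg (Fin.natAdd r i)) = 1 := by
    intro i
    rw [hpoisson]
    rw [Finset.sum_eq_single i]
    · rw [hpdcc, hpdnc, hpdnn]; simp
    · intro m _ hm
      rw [hpdcc, hpdnc, hpdnn]; simp [Ne.symm hm]
    · intro h; exact absurd (Finset.mem_univ i) h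
  have Bgxn : ∀ i : Fin r, poisson (xg (Fin.castAdd r i) * xg (Fin.natAdd r i))
      (xg (Fin.natAdd r i)) = xg (Fin.natAdd r i) := by
    intro i
    rw [hpoisson]
    rw [Finset.sum_eq_single i]
    · rw [hgc, hgn, hpdnn, hpdcn]; simp
    · intro m _ hm
      rw [hgc, hgn, hpdnn, hpdcn]; simp [Ne.symm hm]
    · intro h; exact absurd (Finset.mem_univ i) h
  have Btt : ∀ i j : Fin r, poisson (t i) (t j) = 0 := by
    intro i j
    rw [hpoisson]
    refine Finset.sum_eq_zero fun m _ => ?_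
    rw [htc, htn, htc, htn]
    by_cases hi : i = m <;> by_cases hj : j = m <;> simp [hi, hj]
    subst hi; subst hj; ring
  have Bt1 : ∀ i : Fin r, poisson (t i) 1 = 0 := fun i => hone_r _
  have Btxn : ∀ i : Fin r, poisson (t i) (xg (Fin.natAdd r i)) = 1 + xg (Fin.natAdd r i) := by
    intro i
    have hsplit : t i = xg (Fin.castAdd r i) + xg (Fin.castAdd r i) * xg (Fin.natAdd r i) := by
      rw [htdef i]; ring
    rw [hsplit, hadd_l, Bfxn, Bgxn]
  -- the p-th power map fixes t i
  have hpmt : ∀ i : Fin r, pm (t i) = t i := by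
    intro i
    set f : A := xg (Fin.castAdd r i) with hf
    set g : A := xg (Fin.castAdd r i) * xg (Fin.natAdd r i) with hg
    have hsplit : t i = f + g := by rw [htdef i]; ring
    -- pm f = 0
    have hpmf : pm f = 0 := by
      have := hmon_zero (fun j => if j = Fin.castAdd r i then 1 else 0)
        (fun j => by split <;> omega)
        (by
          intro h
          have := congrFun h (Fin.castAdd r i)
          simp at this)
        (by
          intro j h
          have := congrFun h (Fin.natAdd r j)
          rw [if_neg (Ne.symm (castAdd_ne_natAdd i j))] at this
          simp [epsPair, if_neg (Ne.symm (castAdd_ne_natAdd i j))] at this)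
      rwa [xmon_single] at this
    have hpmg : pm g = g := by
      have := hmon_pair i
      rwa [xmon_pair] at this
    -- every word in f, g is a combination a • f + b • g
    have hword : ∀ u : A, IsWord poisson f g u → ∃ a b : k, u = a • f + b • g := by
      intro u hu
      induction hu with
      | base_left => exact ⟨1, 0, by simp⟩
      | base_right => exact ⟨0, 1, by simp⟩
      | bracket h1 h2 ih1 ih2 =>
        obtain ⟨a, b, rfl⟩ := ih1
        obtain ⟨c, d, rfl⟩ := ih2
        refine ⟨a * d - b * c, 0, ?_⟩
        rw [hadd_l, hsmul_l, hsmul_l, hadd_r, hadd_r, hsmul_r, hsmul_r, hsmul_r, hsmul_r,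
          hself f, hself g, hanti g f, Bfg i]
        module
    -- hence pm (t i) = g + c • f for some c
    have hmem := hjac f g
    rw [← hsplit, hpmf, hpmg, sub_zero] at hmem
    have hle : Submodule.span k
        {z | ∃ u v, IsWord poisson f g u ∧ IsWord poisson f g v ∧ z = poisson u v}
        ≤ Submodule.span k {f} := by
      rw [Submodule.span_le]
      rintro z ⟨u, v, hu, hv, rfl⟩
      obtain ⟨a, b, rfl⟩ := hword u hu
      obtain ⟨c, d, rfl⟩ := hword v hv
      rw [hadd_l, hsmul_l, hsmul_l, hadd_r, hadd_r, hsmul_r, hsmul_r, hsmul_r, hsmul_r,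
        hself f, hself g, hanti g f, Bfg i]
      have heq : a • (c • (0:TruncA k (r + r) p) + d • f) + b • (c • -f + d • 0)
          = (a * d - b * c) • f := by module
      rw [heq]
      exact Submodule.smul_mem _ _ (Submodule.mem_span_singleton_self f)
    obtain ⟨c, hc⟩ := Submodule.mem_span_singleton.mp (hle hmem)
    -- pin down c = 1 using (ad t)^p x_{i+r} = 1 + x_{i+r}
    have hiter : (fun h => poisson (t i) h)^[p] (xg (Fin.natAdd r i))
        = 1 + xg (Fin.natAdd r i) := by
      have key : ∀ n : ℕ, n ≠ 0 → (fun h => poisson (t i) h)^[n] (xg (Fin.natAdd r i))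
          = 1 + xg (Fin.natAdd r i) := by
        intro n hn
        cases n with
        | zero => exact absurd rfl hn
        | succ q =>
          rw [Function.iterate_succ_apply, Btxn]
          exact Function.iterate_fixed (by rw [hadd_r, Bt1, Btxn, zero_add]) q
      exact key p hp0
    have hads := had (t i) (xg (Fin.natAdd r i))
    have hpmeq : pm (t i) = g + c • f := by
      have : pm (t i) - g = c • f := hc.symm
      linear_combination (norm := module) this
    rw [hpmeq, hadd_l, hsmul_l, Bgxn, Bfxn, hiter] at hads
    -- hads : xg n + c • 1 = 1 + xg n
    have hc1 : (c : k) • (1 : A) = 1 := by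
      have h1 := hads
      have : c • (1 : A) - 1 = 0 := by linear_combination (norm := module) h1
      linear_combination (norm := module) this
    have hceq : c = 1 := by
      have := congrArg ε hc1
      rw [map_smul, map_one, smul_eq_mul, mul_one] at this
      exact this
    rw [hpmeq, hceq, one_smul, hsplit]
    ring
  -- assemble the six statements
  have hli : LinearIndependent k T := by
    rw [Fintype.linearIndependent_iff]
    intro c hc
    have hT0 : T 0 = 1 := by rw [hT]; rfl
    have hTs : ∀ i : Fin r, T i.succ = t i := by intro i; rw [hT]; simp
    have hexp : c 0 • (1 : TruncA k (r + r) p) + ∑ i : Fin r, c i.succ • t i = 0 := by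
      rw [← hc, Fin.sum_univ_succ, hT0]
      congr 1
      exact Finset.sum_congr rfl fun i _ => by rw [hTs i]
    have hεt : ∀ i : Fin r, ε (t i) = 0 := by
      intro i
      rw [htdef i, map_mul, hε, epsHom_xg hp0, zero_mul]
    have hc0 : c 0 = 0 := by
      have h1 := congrArg ε hexp
      rw [map_add, map_smul, map_one, map_sum, map_zero] at h1
      rw [Finset.sum_congr rfl (fun j _ => by rw [map_smul, hεt j, smul_zero])] at h1
      rw [Finset.sum_const_zero, add_zero, smul_eq_mul, mul_one] at h1
      exact h1
    have hcs : ∀ i : Fin r, c i.succ = 0 := by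
      intro i
      set L : TruncA k (r + r) p →ₗ[k] k :=
        ε.toLinearMap.comp (pd (Fin.castAdd r i)).toLinearMap with hL
      have hD := congrArg L hexp
      rw [map_add, map_smul, map_sum, map_zero] at hD
      have hL1 : L 1 = 0 := by
        show ε (pd (Fin.castAdd r i) 1) = 0
        rw [Derivation.map_one_eq_zero, map_zero]
      have hterm : ∀ j : Fin r, L (t j) = if j = i then 1 else 0 := by
        intro j
        show ε (pd (Fin.castAdd r i) (t j)) = _
        rw [htc]
        by_cases h : j = i
        · rw [if_pos h, if_pos h, map_add, map_one, hε, epsHom_xg hp0, add_zero]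
        · rw [if_neg h, if_neg h, map_zero]
      rw [hL1, smul_zero, zero_add] at hD
      rw [Finset.sum_congr rfl (fun j _ => map_smul L (c j.succ) (t j))] at hD
      rw [Finset.sum_congr rfl (fun j _ => by
        rw [hterm j, smul_eq_mul, mul_ite, mul_one, mul_zero])] at hD
      rw [Finset.sum_ite_eq' Finset.univ i (fun j => c j.succ)] at hD
      simpa using hD
    intro j
    refine Fin.cases ?_ ?_ j
    · exact hc0
    · exact hcs
  refine ⟨?_, hpmt, ?_, ?_, hli, ?_⟩
  · intro i
    funext g
    rw [← had, hpmt i]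
  · have := hmon_one
    rwa [xmon_zero] at this
  · intro i j
    rw [hT]
    refine Fin.cases ?_ ?_ i <;> [skip; intro i'] <;> refine Fin.cases ?_ ?_ j <;>
      try intro j'
    · rw [Fin.cons_zero]; exact hself 1
    · rw [Fin.cons_zero, Fin.cons_succ, hanti, hone_r, neg_zero]
    · rw [Fin.cons_zero, Fin.cons_succ, hone_r]
    · rw [Fin.cons_succ, Fin.cons_succ]; exact Btt i' j'
  · rw [finrank_span_eq_card hli]
    simp
end

section
/- Let A be a finite-dimensional associative k-algebra (k algebraically closed), G ⊆ Aut(A) a connected closed subgroup of its automorphism group, and M a finite-dimensional A-module. For a ∈ A write P_M(T;a) = det(T·id_M − a_M) = ∑_i ψ_{M,i}(a) T^i, where a_M is left multiplication by a on M. Then each coefficient function ψ_{M,i} : A → k is G-invariant: ψ_{M,i}(g^{-1}(a)) = ψ_{M,i}(a) for all g ∈ G, a ∈ A. -/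
/-- Left multiplication by `a ∈ A` on an `A`-module `M`, as a `k`-linear map. -/
def lmulM (k : Type*) {A M : Type*} [CommSemiring k] [Semiring A]
    [AddCommMonoid M] [Module k M] [Module A M] [SMulCommClass k A M] (a : A) :
    M →ₗ[k] M where
  toFun m := a • m
  map_add' m n := smul_add a m n
  map_smul' c m := (smul_comm c a m).symm

open Module LinearMap

section CharpolyAux
variable {k : Type*} [Field k]

theorem charpoly_conj_equiv {V W : Type*} [AddCommGroup V] [Module k V] [AddCommGroup W]
    [Module k W] [Module.Finite k V] [Module.Finite k W] (e : V ≃ₗ[k] W) (f : V →ₗ[k] V) :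
    LinearMap.charpoly (e.conj f) = LinearMap.charpoly f := by
  classical
  let b := Module.Free.chooseBasis k V
  rw [← LinearMap.charpoly_toMatrix f b, ← LinearMap.charpoly_toMatrix (e.conj f) (b.map e)]
  congr 1
  ext i j
  simp [LinearMap.toMatrix_apply, LinearEquiv.conj_apply, Basis.map_apply]

theorem charpoly_restrict_mul {V : Type*} [AddCommGroup V] [Module k V] [Module.Finite k V]
    (N : Submodule k V) (f : V →ₗ[k] V) (h : ∀ x ∈ N, f x ∈ N) :
    LinearMap.charpoly f =
      LinearMap.charpoly (f.restrict h) *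
        LinearMap.charpoly (N.mapQ N f (fun x hx => h x hx)) := by
  classical
  obtain ⟨N', hc⟩ := N.exists_isCompl
  let eQ : (V ⧸ N) ≃ₗ[k] N' := N.quotientEquivOfIsCompl N' hc
  let e : (↥N × (V ⧸ N)) ≃ₗ[k] V :=
    ((LinearEquiv.refl k ↥N).prodCongr eQ).trans (N.prodEquivOfIsCompl N' hc)
  have he : ∀ p : ↥N × (V ⧸ N), e p = (p.1 : V) + (eQ p.2 : V) := fun p => rfl
  have heN : ∀ x : N, e (x, 0) = (x : V) := by intro x; rw [he]; simp
  have hsnd : ∀ v : V, (e.symm v).2 = N.mkQ v := by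
    intro v
    have h1 := he (e.symm v)
    rw [e.apply_symm_apply] at h1
    have h2 : N.mkQ v = N.mkQ (eQ (e.symm v).2) := by
      conv_lhs => rw [h1]
      rw [map_add]
      have : N.mkQ ((e.symm v).1 : V) = 0 := (Submodule.Quotient.mk_eq_zero N).2 (e.symm v).1.2
      rw [this, zero_add]
    rw [h2, Submodule.mkQ_apply, Submodule.mk_quotientEquivOfIsCompl_apply]
  set F : (↥N × (V ⧸ N)) →ₗ[k] (↥N × (V ⧸ N)) := e.symm.conj f with hFdef
  have hchar : LinearMap.charpoly F = LinearMap.charpoly f := charpoly_conj_equiv e.symm f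
  have hFapp : ∀ p, F p = e.symm (f (e p)) := fun p => rfl
  set fN : ↥N →ₗ[k] ↥N := f.restrict h with hfN
  set fQ : (V ⧸ N) →ₗ[k] (V ⧸ N) := N.mapQ N f (fun x hx => h x hx) with hfQ
  have hF1 : ∀ x : N, F (x, 0) = (fN x, 0) := by
    intro x
    rw [hFapp]
    apply e.injective
    rw [e.apply_symm_apply, heN x, heN (fN x)]
    rfl
  have hF2 : ∀ p, (F p).2 = fQ p.2 := by
    intro p
    rw [hFapp, hsnd]
    have : N.mkQ (e p) = p.2 := by
      have := hsnd (e p); rw [e.symm_apply_apply] at this; exact this.symm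
    rw [← this]
    simp [fQ, Submodule.mapQ_apply, Submodule.mkQ_apply]
  let bN := Module.Free.chooseBasis k ↥N
  let bQ := Module.Free.chooseBasis k (V ⧸ N)
  rw [← hchar, ← LinearMap.charpoly_toMatrix F (bN.prod bQ), ← LinearMap.charpoly_toMatrix fN bN,
    ← LinearMap.charpoly_toMatrix fQ bQ]
  set X := LinearMap.toMatrix (bN.prod bQ) (bN.prod bQ) F with hX
  have hbbl : ∀ j, (bN.prod bQ) (Sum.inl j) = (bN j, 0) := by
    intro j
    refine Prod.ext ?_ ?_
    · exact bN.prod_apply_inl_fst bQ j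
    · exact bN.prod_apply_inl_snd bQ j
  have hbbr : ∀ j, ((bN.prod bQ) (Sum.inr j)).2 = bQ j := fun j => bN.prod_apply_inr_snd bQ j
  have h11 : X.toBlocks₁₁ = LinearMap.toMatrix bN bN fN := by
    ext i j
    simp only [Matrix.toBlocks₁₁, hX, LinearMap.toMatrix_apply, Matrix.of_apply]
    rw [hbbl j, hF1 (bN j), Basis.prod_repr_inl bN bQ _ _]
  have h21 : X.toBlocks₂₁ = 0 := by
    ext i j
    simp only [Matrix.toBlocks₂₁, hX, LinearMap.toMatrix_apply, Matrix.of_apply,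
      Matrix.zero_apply]
    rw [hbbl j, hF1 (bN j), Basis.prod_repr_inr bN bQ _ _]
    simp
  have h22 : X.toBlocks₂₂ = LinearMap.toMatrix bQ bQ fQ := by
    ext i j
    simp only [Matrix.toBlocks₂₂, hX, LinearMap.toMatrix_apply, Matrix.of_apply]
    rw [Basis.prod_repr_inr bN bQ _ _, hF2, hbbr j]
  rw [← Matrix.fromBlocks_toBlocks X, h11, h21, h22, Matrix.charpoly_fromBlocks_zero₂₁]

end CharpolyAux

theorem isSemisimple_of_isSimple {R M : Type*} [Ring R] [AddCommGroup M] [Module R M]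
    [IsSimpleModule R M] : IsSemisimpleModule R M := by
  apply IsSemisimpleModule.of_sSup_simples_eq_top
  apply top_unique
  apply le_sSup
  exact IsSimpleModule.congr Submodule.topEquiv

section RepMod
variable {k A V : Type*} [Field k] [Ring A] [Algebra k A] [AddCommGroup V] [Module k V]

def RepMod (r : A →ₐ[k] Module.End k V) : Type _ := V

namespace RepMod
variable (r : A →ₐ[k] Module.End k V)

instance : AddCommGroup (RepMod r) := inferInstanceAs (AddCommGroup V)
instance : Module k (RepMod r) := inferInstanceAs (Module k V)
instance : Module A (RepMod r) := Module.compHom V r.toRingHom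

def of : V ≃ₗ[k] RepMod r := LinearEquiv.refl k V

theorem smul_def (a : A) (v : V) : a • (of r v) = of r (r a v) := rfl

theorem algebra_smul (c : k) (v : V) : (algebraMap k A c) • (of r v) = of r (c • v) := by
  rw [smul_def, AlgHom.commutes]
  rfl

instance : IsScalarTower k A (RepMod r) :=
  ⟨fun c a v => by
    show of r (r (c • a) ((of r).symm v)) = c • of r (r a ((of r).symm v))
    rw [map_smul]
    rfl⟩

instance : SMulCommClass k A (RepMod r) :=
  ⟨fun c a v => by
    show c • of r (r a ((of r).symm v)) = of r (r a ((of r).symm (c • v)))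
    have h1 : (of r).symm (c • v) = c • (of r).symm v := map_smul (of r).symm c v
    rw [h1, map_smul, map_smul]⟩

instance [Module.Finite k V] : Module.Finite k (RepMod r) :=
  inferInstanceAs (Module.Finite k V)

theorem isSimpleModule (hnt : Nontrivial V)
    (hirr : ∀ N : Submodule k V, (∀ (a : A) (x : V), x ∈ N → r a x ∈ N) → N = ⊥ ∨ N = ⊤) :
    IsSimpleModule A (RepMod r) := by
  have hbt : (⊥ : Submodule A (RepMod r)) ≠ ⊤ := by
    intro h
    obtain ⟨x, hx⟩ := exists_ne (0 : V)
    have : of r x ∈ (⊥ : Submodule A (RepMod r)) := h ▸ Submodule.mem_top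
    exact hx ((Submodule.mem_bot (R := A) (M := RepMod r)).mp this)
  haveI : Nontrivial (Submodule A (RepMod r)) := ⟨⊥, ⊤, hbt⟩
  refine (isSimpleModule_iff ..).mpr ⟨fun P => ?_⟩
  let Pk : Submodule k V :=
    { carrier := {v : V | of r v ∈ P}
      add_mem' := fun ha hb => P.add_mem ha hb
      zero_mem' := by simpa using P.zero_mem
      smul_mem' := fun c v hv => by
        have : (algebraMap k A c) • (of r v) ∈ P := P.smul_mem _ hv
        rw [algebra_smul] at this
        exact this }
  have hPk : ∀ (a : A) (x : V), x ∈ Pk → r a x ∈ Pk := fun a x hx => by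
    show of r (r a x) ∈ P
    rw [← smul_def]
    exact P.smul_mem a hx
  rcases hirr Pk hPk with h | h
  · left
    ext w
    simp only [Submodule.mem_bot]
    constructor
    · intro hw
      have : (of r).symm w ∈ Pk := by
        show of r ((of r).symm w) ∈ P
        simpa using hw
      rw [h] at this
      have h0 : (of r).symm w = 0 := this
      simpa using congrArg (of r) h0
    · rintro rfl; exact P.zero_mem
  · right
    ext w
    simp only [Submodule.mem_top, iff_true]
    have : (of r).symm w ∈ Pk := h ▸ Submodule.mem_top
    exact (this : of r ((of r).symm w) ∈ P)

end RepMod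
end RepMod

section ISO
variable {k A : Type*} [Field k] [Ring A] [Algebra k A]

theorem simple_iso_of_ann_le (M₁ M₂ : Type*) [AddCommGroup M₁] [Module k M₁] [Module A M₁]
    [IsScalarTower k A M₁] [SMulCommClass k A M₁] [Module.Finite k M₁] [IsSimpleModule A M₁]
    [AddCommGroup M₂] [Module A M₂] [IsSimpleModule A M₂]
    (hle : ∀ a : A, (∀ m : M₁, a • m = 0) → ∀ m : M₂, a • m = 0) :
    Nonempty (M₂ ≃ₗ[A] M₁) := by
  classical
  haveI : IsSemisimpleModule A M₁ := isSemisimple_of_isSimple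
  set d := finrank k M₁ with hd
  let b : Basis (Fin d) k M₁ := finBasis k M₁
  haveI : IsSemisimpleModule A (Fin d → M₁) := by
    refine isSemisimpleModule_of_isSemisimpleModule_submodule'
      (p := fun i => LinearMap.range (LinearMap.single A (fun _ : Fin d => M₁) i)) ?_ ?_
    · intro i
      have hinj : Function.Injective (LinearMap.single A (fun _ : Fin d => M₁) i) := by
        rw [LinearMap.coe_single]
        exact Pi.single_injective i
      exact IsSemisimpleModule.congr (LinearEquiv.ofInjective _ hinj).symm
    · exact LinearMap.iSup_range_single A _
  let θ : A →ₗ[A] (Fin d → M₁) := LinearMap.pi (fun i => LinearMap.toSpanSingleton A M₁ (b i))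
  have hker0 : ∀ a : A, a ∈ LinearMap.ker θ ↔ ∀ m : M₁, a • m = 0 := by
    intro a
    constructor
    · intro ha m
      let Na : Submodule k M₁ :=
        { carrier := {m : M₁ | a • m = 0}
          add_mem' := fun {x y} hx hy => by
            show a • (x + y) = 0
            rw [smul_add, hx, hy, add_zero]
          zero_mem' := smul_zero a
          smul_mem' := fun c m hm => by
            show a • (c • m) = 0
            rw [smul_comm, hm, smul_zero] }
      have hb : ∀ i, b i ∈ Na := by
        intro i
        have := congrFun (LinearMap.mem_ker.mp ha) i
        exact (by simpa [θ, LinearMap.pi_apply, LinearMap.toSpanSingleton_apply] using this : a • b i = 0)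
      have hNa : Na = ⊤ := by
        apply top_unique
        rw [← b.span_eq]
        apply Submodule.span_le.mpr
        rintro _ ⟨i, rfl⟩
        exact hb i
      have : m ∈ Na := hNa ▸ Submodule.mem_top
      exact this
    · intro hm
      apply LinearMap.mem_ker.mpr
      funext i
      simpa [θ, LinearMap.pi_apply, LinearMap.toSpanSingleton_apply] using hm (b i)
  haveI : IsSemisimpleModule A (A ⧸ LinearMap.ker θ) :=
    IsSemisimpleModule.congr θ.quotKerEquivRange
  haveI : Nontrivial M₂ := IsSimpleModule.nontrivial (R := A) (M := M₂)
  obtain ⟨x₀, hx₀⟩ := exists_ne (0 : M₂)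
  let ψ₀ : A →ₗ[A] M₂ := LinearMap.toSpanSingleton A M₂ x₀
  have hψ₀surj : Function.Surjective ψ₀ := by
    have : LinearMap.range ψ₀ ≠ ⊥ := by
      intro h
      apply hx₀
      have : ψ₀ 1 ∈ LinearMap.range ψ₀ := LinearMap.mem_range_self _ 1
      rw [h] at this
      simpa [ψ₀, LinearMap.toSpanSingleton_apply] using this
    rcases eq_bot_or_eq_top (LinearMap.range ψ₀) with h | h
    · exact absurd h this
    · exact LinearMap.range_eq_top.mp h
  have hkerle : LinearMap.ker θ ≤ LinearMap.ker ψ₀ := by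
    intro a ha
    have := (hker0 a).mp ha
    apply LinearMap.mem_ker.mpr
    simpa [ψ₀, LinearMap.toSpanSingleton_apply] using hle a this x₀
  let ψ : (A ⧸ LinearMap.ker θ) →ₗ[A] M₂ := Submodule.liftQ _ ψ₀ hkerle
  have hψsurj : Function.Surjective ψ := by
    intro m
    obtain ⟨a, rfl⟩ := hψ₀surj m
    exact ⟨Submodule.Quotient.mk a, rfl⟩
  obtain ⟨C, hC⟩ := exists_isCompl (LinearMap.ker ψ)
  have hbij : Function.Bijective (ψ ∘ₗ C.subtype) := by
    constructor
    · intro x y hxy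
      have : (x : A ⧸ LinearMap.ker θ) - y ∈ LinearMap.ker ψ := by
        simp only [LinearMap.mem_ker, map_sub]
        simpa [sub_eq_zero] using hxy
      have h2 : (x : A ⧸ LinearMap.ker θ) - y ∈ C := C.sub_mem x.2 y.2
      have := hC.disjoint.le_bot ⟨this, h2⟩
      rw [Submodule.mem_bot] at this
      exact Subtype.ext (sub_eq_zero.mp this)
    · intro m
      obtain ⟨y, hy⟩ := hψsurj m
      obtain ⟨n, hn, c, hc, hsum⟩ := Submodule.mem_sup.mp
        (hC.codisjoint.eq_top ▸ Submodule.mem_top : y ∈ LinearMap.ker ψ ⊔ C)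
      refine ⟨⟨c, hc⟩, ?_⟩
      have : ψ y = ψ c := by
        rw [← hsum, map_add, LinearMap.mem_ker.mp hn, zero_add]
      simpa using (this ▸ hy)
  let ι : M₂ →ₗ[A] (Fin d → M₁) :=
    (LinearMap.range θ).subtype ∘ₗ (θ.quotKerEquivRange : (A ⧸ LinearMap.ker θ) ≃ₗ[A] LinearMap.range θ).toLinearMap ∘ₗ
      C.subtype ∘ₗ ((LinearEquiv.ofBijective (ψ ∘ₗ C.subtype) hbij).symm : M₂ ≃ₗ[A] C).toLinearMap
  have hι_inj : Function.Injective ι := by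
    simp only [ι, LinearMap.coe_comp, LinearEquiv.coe_coe]
    exact Subtype.val_injective.comp ((θ.quotKerEquivRange).injective.comp
      (Subtype.val_injective.comp
        ((LinearEquiv.ofBijective (ψ ∘ₗ C.subtype) hbij).symm.injective)))
  have : ι x₀ ≠ 0 := fun h => hx₀ (hι_inj (by simpa using h))
  have hex : ∃ i, ι x₀ i ≠ 0 := by
    by_contra hno
    push_neg at hno
    exact this (funext hno)
  obtain ⟨i, hi⟩ := hex
  let θ' : M₂ →ₗ[A] M₁ := (LinearMap.proj i) ∘ₗ ι
  have hθ' : θ' ≠ 0 := fun h => hi (by simpa [θ'] using congrFun (congrArg (↑·) h) x₀)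
  exact ⟨LinearEquiv.ofBijective θ' (LinearMap.bijective_of_ne_zero hθ')⟩

end ISO

section Main

universe uk uA uG uV

variable {k : Type uk} {A : Type uA} {G : Type uG}
variable [Field k] [Ring A] [Algebra k A] [Module.Finite k A]
variable [Group G] [TopologicalSpace G] [TopologicalSpace k] [T1Space k]
variable (ρ : G →* (A ≃ₐ[k] A))

def GoodRep {V : Type uV} [AddCommGroup V] [Module k V] [Module.Finite k V]
    (r : A →ₐ[k] Module.End k V) : Prop :=
  ∃ (ι : Type uA) (_ : Finite ι) (f : G → ι), (∀ i, IsClosed (f ⁻¹' {i})) ∧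
    ∀ g h : G, f g = f h → ∀ a : A,
      LinearMap.charpoly (r (ρ g a)) = LinearMap.charpoly (r (ρ h a))

theorem goodRep_triv {V : Type uV} [AddCommGroup V] [Module k V] [Module.Finite k V]
    (r : A →ₐ[k] Module.End k V) (hs : Subsingleton V) : GoodRep ρ r := by
  refine ⟨PUnit, inferInstance, fun _ => PUnit.unit, ?_, ?_⟩
  · intro i
    have : (fun _ : G => PUnit.unit) ⁻¹' {i} = Set.univ := by
      ext g; simp
    rw [this]; exact isClosed_univ
  · intro g h _ a
    have : r (ρ g a) = r (ρ h a) := LinearMap.ext fun v => Subsingleton.elim _ _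
    rw [this]

theorem goodRep_of_irr {V : Type uV} [AddCommGroup V] [Module k V] [Module.Finite k V]
    (hcont : ∀ (φ : A →ₗ[k] k) (a : A), Continuous fun g : G => φ (ρ g a))
    (r : A →ₐ[k] Module.End k V) (hnt : Nontrivial V)
    (hirr : ∀ N : Submodule k V, (∀ (a : A) (x : V), x ∈ N → r a x ∈ N) → N = ⊥ ∨ N = ⊤) :
    GoodRep ρ r := by
  classical
  set K : G → Submodule k A :=
    fun g => LinearMap.ker (r.toLinearMap ∘ₗ (ρ g).toLinearMap) with hK
  have hKmem : ∀ g b, b ∈ K g ↔ r (ρ g b) = 0 := by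
    intro g b
    simp [hK, LinearMap.mem_ker]
  -- two-sidedness
  have hK2l : ∀ (g : G) (x b : A), b ∈ K g → x * b ∈ K g := by
    intro g x b hb
    rw [hKmem] at hb ⊢
    rw [map_mul, map_mul, hb, mul_zero]
  have hK2r : ∀ (g : G) (x b : A), b ∈ K g → b * x ∈ K g := by
    intro g x b hb
    rw [hKmem] at hb ⊢
    rw [map_mul, map_mul, hb, zero_mul]
  -- equal finrank
  have hKrank : ∀ g, finrank k (K g) = finrank k (LinearMap.ker r.toLinearMap) := by
    intro g
    have h1 : K g = Submodule.comap (ρ g).toLinearMap (LinearMap.ker r.toLinearMap) :=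
      LinearMap.ker_comp _ _
    have h2 : (ρ g).toLinearMap = ((ρ g).toLinearEquiv : A →ₗ[k] A) := rfl
    rw [h1, h2, Submodule.comap_equiv_eq_map_symm]
    exact LinearEquiv.finrank_map_eq _ _
  have hKne : ∀ g, (1 : A) ∉ K g := by
    intro g h1
    rw [hKmem, map_one, map_one] at h1
    obtain ⟨x, hx⟩ := exists_ne (0 : V)
    apply hx
    have := congrFun (congrArg (fun (f : Module.End k V) => (f : V → V)) h1) x
    simpa using this
  -- primeness
  have hprime : ∀ (g : G) (B C : Submodule k A), (∀ c ∈ C, ∀ y : A, y * c ∈ C) →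
      (∀ b ∈ B, ∀ c ∈ C, b * c ∈ K g) → B ≤ K g ∨ C ≤ K g := by
    intro g B C hCleft hBC
    by_cases hCK : C ≤ K g
    · right; exact hCK
    left
    set S : Set V := {w | ∃ c ∈ C, ∃ v : V, w = r (ρ g c) v} with hS
    set W : Submodule k V := Submodule.span k S with hW
    have hWinv : ∀ (a : A) (x : V), x ∈ W → r a x ∈ W := by
      intro a x hx
      induction hx using Submodule.span_induction with
      | mem w hw =>
        obtain ⟨c, hc, v, rfl⟩ := hw
        have : r a (r (ρ g c) v) = r (ρ g ((ρ g).symm a * c)) v := by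
          rw [map_mul, AlgEquiv.apply_symm_apply, map_mul]
          rfl
        rw [this]
        exact Submodule.subset_span ⟨(ρ g).symm a * c, hCleft c hc _, v, rfl⟩
      | zero => rw [map_zero]; exact W.zero_mem
      | add y z _ _ hy hz => rw [map_add]; exact W.add_mem hy hz
      | smul c y _ hy => rw [map_smul]; exact W.smul_mem c hy
    obtain ⟨c₀, hc₀, hc₀K⟩ : ∃ c₀ ∈ C, c₀ ∉ K g := by
      by_contra hno
      push_neg at hno
      exact hCK hno
    have hr0 : r (ρ g c₀) ≠ 0 := fun h0 => hc₀K ((hKmem g c₀).mpr h0)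
    obtain ⟨v₀, hv₀⟩ : ∃ v₀ : V, r (ρ g c₀) v₀ ≠ 0 := by
      by_contra hno
      push_neg at hno
      exact hr0 (LinearMap.ext hno)
    have hWbot : W ≠ ⊥ := by
      intro h0
      apply hv₀
      have : r (ρ g c₀) v₀ ∈ W := Submodule.subset_span ⟨c₀, hc₀, v₀, rfl⟩
      rw [h0] at this
      simpa using this
    have hWtop : W = ⊤ := (hirr W hWinv).resolve_left hWbot
    intro b hb
    rw [hKmem]
    apply LinearMap.ext
    intro v
    rw [LinearMap.zero_apply]
    have hv : v ∈ W := hWtop ▸ Submodule.mem_top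
    have hle : W ≤ LinearMap.ker (r (ρ g b)) := by
      rw [hW]
      apply Submodule.span_le.mpr
      rintro w ⟨c, hc, v', rfl⟩
      rw [SetLike.mem_coe, LinearMap.mem_ker]
      have : r (ρ g b) (r (ρ g c) v') = r (ρ g (b * c)) v' := by
        rw [map_mul, map_mul]; rfl
      rw [this, (hKmem g (b * c)).mp (hBC b hb c hc), LinearMap.zero_apply]
    exact LinearMap.mem_ker.mp (hle hv)
  -- finiteness of the set of kernels
  have hfin : (Set.range K).Finite := by
    have havoid : ∀ F : Finset (Submodule k A), (↑F ⊆ Set.range K) → ∀ g, F.inf _root_.id ≤ K g →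
        K g ∈ F := by
      intro F
      induction F using Finset.induction_on with
      | empty =>
        intro _ g hle
        exact absurd (hle (by simp : (1 : A) ∈ (∅ : Finset (Submodule k A)).inf _root_.id)) (hKne g)
      | @insert J F hJF ih =>
        intro hsub g hle
        rw [Finset.inf_insert] at hle
        have hJmem : J ∈ Set.range K := hsub (Finset.mem_insert_self J F)
        have hFsub : ↑F ⊆ Set.range K := fun x hx => hsub (Finset.mem_insert_of_mem hx)
        have hCleft : ∀ c ∈ F.inf _root_.id, ∀ y : A, y * c ∈ F.inf _root_.id := by
          intro c hc y
          rw [Submodule.mem_finsetInf] at hc ⊢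
          intro J' hJ'
          obtain ⟨g', hg'⟩ := hFsub hJ'
          subst hg'
          exact hK2l g' y c (hc _ hJ')
        have hBC : ∀ b ∈ J, ∀ c ∈ F.inf _root_.id, b * c ∈ K g := by
          intro b hb c hc
          apply hle
          rw [Submodule.mem_inf]
          constructor
          · obtain ⟨gJ, rfl⟩ := hJmem
            exact hK2r gJ c b hb
          · rw [Submodule.mem_finsetInf] at hc ⊢
            intro J' hJ'
            obtain ⟨g', hg'⟩ := hFsub hJ'
            subst hg'
            exact hK2l g' b c (hc _ hJ')
        rcases hprime g J (F.inf _root_.id) hCleft hBC with hBle | hCle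
        · obtain ⟨gJ, rfl⟩ := hJmem
          have : K gJ = K g := Submodule.eq_of_le_of_finrank_le hBle
            (by rw [hKrank, hKrank])
          rw [← this]
          exact Finset.mem_insert_self _ _
        · exact Finset.mem_insert_of_mem (ih hFsub g hCle)
    set Sset : Set (Submodule k A) :=
      {P | ∃ F : Finset (Submodule k A), (↑F ⊆ Set.range K) ∧ F.inf _root_.id = P} with hSset
    have hne : Sset.Nonempty := ⟨⊤, ∅, by simp, by simp⟩
    obtain ⟨P₀, hP₀mem, hmin⟩ := IsArtinian.set_has_minimal Sset hne
    obtain ⟨F₀, hF₀sub, hF₀inf⟩ := hP₀mem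
    have hP₀le : ∀ g, P₀ ≤ K g := by
      intro g
      by_contra hng
      have hmem : P₀ ⊓ K g ∈ Sset := by
        refine ⟨insert (K g) F₀, ?_, ?_⟩
        · intro x hx
          rcases Finset.mem_insert.mp (by exact_mod_cast hx) with h | h
          · exact h ▸ Set.mem_range_self g
          · exact hF₀sub h
        · rw [Finset.inf_insert, hF₀inf, _root_.id]
          exact inf_comm _ _
      apply hmin _ hmem
      apply lt_of_le_of_ne inf_le_left
      intro h
      exact hng (h ▸ inf_le_right)
    apply Set.Finite.subset F₀.finite_toSet
    rintro _ ⟨g, rfl⟩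
    exact havoid F₀ hF₀sub g (hF₀inf ▸ hP₀le g)
  haveI hfinsub : Finite ↥(Set.range K) := hfin.to_subtype
  refine ⟨↥(Set.range K), hfinsub, fun g => ⟨K g, Set.mem_range_self g⟩, ?_, ?_⟩
  · rintro ⟨J, gJ, rfl⟩
    have hset : (fun g => (⟨K g, Set.mem_range_self g⟩ : ↥(Set.range K))) ⁻¹'
        {⟨K gJ, Set.mem_range_self gJ⟩} = {h : G | K gJ ≤ K h} := by
      ext h
      simp only [Set.mem_preimage, Set.mem_singleton_iff, Subtype.mk.injEq, Set.mem_setOf_eq]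
      constructor
      · intro he; rw [he]
      · intro hle
        exact (Submodule.eq_of_le_of_finrank_le hle (by rw [hKrank, hKrank])).symm
    rw [hset]
    have hset2 : {h : G | K gJ ≤ K h} =
        ⋂ (b : ↥(K gJ)) (v : V) (ψ : Module.Dual k V),
          (fun h : G => ψ (r (ρ h (b : A)) v)) ⁻¹' {0} := by
      ext h
      simp only [Set.mem_setOf_eq, Set.mem_iInter, Set.mem_preimage, Set.mem_singleton_iff]
      constructor
      · intro hle b v ψ
        have hb : (b : A) ∈ K h := hle b.2
        rw [(hKmem h b).mp hb]
        simp
      · intro hall b hb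
        rw [hKmem]
        apply LinearMap.ext
        intro v
        rw [LinearMap.zero_apply]
        rw [← Module.forall_dual_apply_eq_zero_iff (R := k)]
        intro ψ
        exact hall ⟨b, hb⟩ v ψ
    rw [hset2]
    refine isClosed_iInter fun b => isClosed_iInter fun v => isClosed_iInter fun ψ => ?_
    have hfun : (fun h : G => ψ (r (ρ h (b : A)) v)) =
        fun h : G => (ψ ∘ₗ (LinearMap.applyₗ v) ∘ₗ r.toLinearMap) (ρ h (b : A)) := rfl
    rw [hfun]
    exact (isClosed_singleton).preimage (hcont _ _)
  · intro g h hgh a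
    have hKgh : K g = K h := congrArg Subtype.val hgh
    set rg : A →ₐ[k] Module.End k V := r.comp (ρ g).toAlgHom with hrg
    set rh : A →ₐ[k] Module.End k V := r.comp (ρ h).toAlgHom with hrh
    have hirr' : ∀ (g' : G) (N : Submodule k V),
        (∀ (a : A) (x : V), x ∈ N → (r.comp (ρ g').toAlgHom) a x ∈ N) → N = ⊥ ∨ N = ⊤ := by
      intro g' N hN
      apply hirr N
      intro b x hx
      have hb : r b x = (r.comp (ρ g').toAlgHom) ((ρ g').symm b) x := by
        simp [AlgHom.comp_apply, AlgEquiv.apply_symm_apply]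
      rw [hb]
      exact hN _ x hx
    haveI hsg : IsSimpleModule A (RepMod rg) := RepMod.isSimpleModule rg hnt (hirr' g)
    haveI hsh : IsSimpleModule A (RepMod rh) := RepMod.isSimpleModule rh hnt (hirr' h)
    have hann : ∀ b : A, (∀ m : RepMod rh, b • m = 0) → ∀ m : RepMod rg, b • m = 0 := by
      intro b hbh
      have h1 : rh b = 0 := by
        apply LinearMap.ext; intro v
        have h2 := hbh (RepMod.of rh v)
        rw [RepMod.smul_def] at h2
        simpa using (h2 : rh b v = 0)
      have h2 : b ∈ K h := (hKmem h b).mpr h1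
      rw [← hKgh] at h2
      have h3 : rg b = 0 := (hKmem g b).mp h2
      intro m
      have : b • (RepMod.of rg ((RepMod.of rg).symm m)) = RepMod.of rg (rg b ((RepMod.of rg).symm m)) :=
        RepMod.smul_def rg b _
      have this' : b • m = rg b m := this
      rw [h3] at this'
      exact this'
    obtain ⟨e⟩ := simple_iso_of_ann_le (k := k) (A := A) (RepMod rh) (RepMod rg) hann
    have halg : ∀ (c : k) (w : RepMod rh),
        (algebraMap k A c) • w = RepMod.of rh (c • (RepMod.of rh).symm w) := by
      intro c w
      have := RepMod.algebra_smul rh c ((RepMod.of rh).symm w)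
      simpa using this
    let ek : V ≃ₗ[k] V :=
      { toFun := fun v => (RepMod.of rh).symm (e (RepMod.of rg v))
        invFun := fun v => (RepMod.of rg).symm (e.symm (RepMod.of rh v))
        map_add' := fun x y => by simp
        map_smul' := fun c v => by
          simp only [RingHom.id_apply]
          have h1 : RepMod.of rg (c • v) = (algebraMap k A c) • RepMod.of rg v :=
            (RepMod.algebra_smul rg c v).symm
          rw [h1, map_smul, halg]
          simp
        left_inv := fun v => by simp
        right_inv := fun v => by simp }
    have hsmul : ∀ (b : A) (w : RepMod rh),
        b • w = RepMod.of rh (rh b ((RepMod.of rh).symm w)) := by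
      intro b w
      have := RepMod.smul_def rh b ((RepMod.of rh).symm w)
      simpa using this
    have hconj : ∀ v : V, ek (r (ρ g a) v) = r (ρ h a) (ek v) := by
      intro v
      have h1 := map_smul e a (RepMod.of rg v)
      rw [RepMod.smul_def rg a v, hsmul a (e (RepMod.of rg v))] at h1
      show (RepMod.of rh).symm (e (RepMod.of rg (rg a v))) = rh a (ek v)
      rw [h1]
      simp [ek]
    have hcc : r (ρ h a) = ek.conj (r (ρ g a)) := by
      apply LinearMap.ext
      intro v
      rw [LinearEquiv.conj_apply_apply]
      have h2 := hconj (ek.symm v)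
      rw [ek.apply_symm_apply] at h2
      exact h2.symm
    rw [hcc, charpoly_conj_equiv]

theorem goodRep_all
    (hcont : ∀ (φ : A →ₗ[k] k) (a : A), Continuous fun g : G => φ (ρ g a)) :
    ∀ (n : ℕ) (V : Type uV) [AddCommGroup V] [Module k V] [Module.Finite k V],
      finrank k V ≤ n → ∀ (r : A →ₐ[k] Module.End k V), GoodRep ρ r := by
  intro n
  induction n with
  | zero =>
    intro V _ _ _ hle r
    have hze : finrank k V = 0 := le_antisymm hle (Nat.zero_le _)
    exact goodRep_triv ρ r (finrank_zero_iff.mp hze)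
  | succ n IH =>
    intro V _ _ _ hle r
    by_cases hs : Subsingleton V
    · exact goodRep_triv ρ r hs
    have hnt : Nontrivial V := not_subsingleton_iff_nontrivial.mp hs
    by_cases hirr : ∀ N : Submodule k V, (∀ (a : A) (x : V), x ∈ N → r a x ∈ N) → N = ⊥ ∨ N = ⊤
    · exact goodRep_of_irr ρ hcont r hnt hirr
    push_neg at hirr
    obtain ⟨N, hNinv, hNbot, hNtop⟩ := hirr
    let rN : A →ₐ[k] Module.End k ↥N :=
      { toFun := fun a => (r a).restrict (fun x hx => hNinv a x hx)
        map_one' := by ext x; simp [LinearMap.restrict_apply]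
        map_mul' := fun a b => by ext x; simp [LinearMap.restrict_apply]
        map_zero' := by ext x; simp [LinearMap.restrict_apply]
        map_add' := fun a b => by ext x; simp [LinearMap.restrict_apply]
        commutes' := fun c => by
          ext x
          simp [LinearMap.restrict_apply, Module.algebraMap_end_apply] }
    let rQ : A →ₐ[k] Module.End k (V ⧸ N) :=
      { toFun := fun a => N.mapQ N (r a) (fun x hx => hNinv a x hx)
        map_one' := by
          apply Submodule.linearMap_qext
          ext x
          simp [Submodule.mapQ_apply]
        map_mul' := fun a b => by
          apply Submodule.linearMap_qext
          ext x
          simp [Submodule.mapQ_apply]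
        map_zero' := by
          apply Submodule.linearMap_qext
          ext x
          simp [Submodule.mapQ_apply]
        map_add' := fun a b => by
          apply Submodule.linearMap_qext
          ext x
          simp [Submodule.mapQ_apply]
        commutes' := fun c => by
          apply Submodule.linearMap_qext
          ext x
          simp [Submodule.mapQ_apply, Module.algebraMap_end_apply] }
    have hrankN : finrank k ↥N ≤ n := by
      have h1 : finrank k ↥N < finrank k V := Submodule.finrank_lt hNtop
      omega
    have hrankQ : finrank k (V ⧸ N) ≤ n := by
      have h1 : finrank k (V ⧸ N) + finrank k ↥N = finrank k V :=
        Submodule.finrank_quotient_add_finrank N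
      have h2 : 0 < finrank k ↥N :=
        Module.finrank_pos_iff.mpr (Submodule.nontrivial_iff_ne_bot.mpr hNbot)
      omega
    obtain ⟨ι₁, hι₁, f₁, hc₁, he₁⟩ := IH ↥N hrankN rN
    obtain ⟨ι₂, hι₂, f₂, hc₂, he₂⟩ := IH (V ⧸ N) hrankQ rQ
    refine ⟨ι₁ × ι₂, inferInstance, fun g => (f₁ g, f₂ g), ?_, ?_⟩
    · rintro ⟨i, j⟩
      have : (fun g => ((f₁ g, f₂ g) : ι₁ × ι₂)) ⁻¹' {(i, j)} = f₁ ⁻¹' {i} ∩ f₂ ⁻¹' {j} := by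
        ext x; simp [Prod.ext_iff]
      rw [this]
      exact (hc₁ i).inter (hc₂ j)
    · intro g h hgh a
      have hg1 : f₁ g = f₁ h := (Prod.ext_iff.mp hgh).1
      have hg2 : f₂ g = f₂ h := (Prod.ext_iff.mp hgh).2
      have key : ∀ b : A, LinearMap.charpoly (r b) =
          LinearMap.charpoly (rN b) * LinearMap.charpoly (rQ b) := fun b =>
        charpoly_restrict_mul N (r b) (fun x hx => hNinv b x hx)
      rw [key, key, he₁ g h hg1 a, he₂ g h hg2 a]

end Main


/-- Let `A` be a finite-dimensional associative algebra over an
algebraically closed field `k`, `G` a connected group acting on `A` by algebra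
automorphisms (the action depending continuously/algebraically on `g`, as for a
connected closed subgroup of the automorphism group), and `M` a finite-dimensional
`A`-module. Then the coefficients of the characteristic polynomial of left
multiplication on `M` are `G`-invariant functions of `a ∈ A`:
`ψ_{M,i}(g⁻¹(a)) = ψ_{M,i}(a)`. -/
theorem stmt10 {k A G : Type*} [Field k] [IsAlgClosed k]
    [Ring A] [Algebra k A] [Module.Finite k A]
    [Group G] [TopologicalSpace G] [PreconnectedSpace G]
    [TopologicalSpace k] [T1Space k]
    (ρ : G →* (A ≃ₐ[k] A))
    (hcont : ∀ (φ : A →ₗ[k] k) (a : A), Continuous fun g : G => φ (ρ g a))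
    (M : Type*) [AddCommGroup M] [Module k M] [Module A M] [IsScalarTower k A M]
    [SMulCommClass k A M] [Module.Finite k M] :
    ∀ (g : G) (a : A),
      LinearMap.charpoly (lmulM k (M := M) ((ρ g)⁻¹ a)) =
        LinearMap.charpoly (lmulM k (M := M) a) := by
  intro g a
  let repA : A →ₐ[k] Module.End k M :=
    { toFun := fun b => lmulM k b
      map_one' := LinearMap.ext fun m => one_smul A m
      map_mul' := fun b c => LinearMap.ext fun m => mul_smul b c m
      map_zero' := LinearMap.ext fun m => zero_smul A m
      map_add' := fun b c => LinearMap.ext fun m => add_smul b c m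
      commutes' := fun c => LinearMap.ext fun m => by
        show (algebraMap k A c) • m = (algebraMap k (Module.End k M) c) m
        rw [Module.algebraMap_end_apply, algebraMap_smul] }
  obtain ⟨ι, hι, f, hclosed, heq⟩ := goodRep_all ρ hcont (finrank k M) M le_rfl repA
  haveI := hι
  have hconst : ∀ g' : G, f g' = f 1 := by
    intro g'
    have hS : IsClosed (f ⁻¹' {f 1}) := hclosed _
    have hSc : IsClosed ((f ⁻¹' {f 1})ᶜ) := by
      have hcompl : (f ⁻¹' {f 1})ᶜ = ⋃ (i : {i : ι // i ≠ f 1}), f ⁻¹' {(i : ι)} := by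
        ext x
        simp only [Set.mem_compl_iff, Set.mem_preimage, Set.mem_singleton_iff, Set.mem_iUnion]
        constructor
        · intro hx; exact ⟨⟨f x, hx⟩, rfl⟩
        · rintro ⟨⟨i, hi⟩, hfx⟩
          intro hne
          apply hi
          have : f x = i := hfx
          rw [← this, hne]
      rw [hcompl]
      exact isClosed_iUnion_of_finite fun i => hclosed _
    rcases isClopen_iff.mp ⟨hS, isClosed_compl_iff.mp hSc⟩ with hcase | hcase
    · exfalso
      have h1mem : (1 : G) ∈ f ⁻¹' {f 1} := rfl
      rw [hcase] at h1mem
      exact h1mem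
    · have : g' ∈ f ⁻¹' {f 1} := hcase ▸ Set.mem_univ g'
      exact this
  have h2 := heq g⁻¹ 1 (hconst g⁻¹) a
  have h3 : (ρ g)⁻¹ a = ρ g⁻¹ a := by rw [map_inv]
  have h4 : ρ (1 : G) a = a := by rw [map_one]; rfl
  rw [h4] at h2
  show LinearMap.charpoly (repA ((ρ g)⁻¹ a)) = LinearMap.charpoly (repA a)
  rw [h3]
  exact h2
end
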